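/- arXiv:2404.10750 — 4 statements merged into one kernel-verified Lean document; each statement's English description precedes it below -/
import Mathlib

section
/- Let k be a positive integer. Every digraph D with more than (k−1)·|V(D)| arcs has a subdigraph D' with at least one arc such that every vertex of D' has out-degree either 0 or at least k/2, and in-degree either 0 or at least k/2 (i.e., D' has minimum pseudo-semidegree at least k/2). -/
open Finset

section Defs

variable {V W : Type*}

/-- Number of arcs of a digraph given by a Boolean adjacency relation. -/
def arcCount [Fintype V] (A : V → V → Bool) : ℕ :=
  ((univ : Finset (V × V)).filter (fun p => A p.1 p.2)).card

/-- Out-neighbourhood. -/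
def outNbr [Fintype V] (A : V → V → Bool) (a : V) : Finset V :=
  univ.filter (fun v => A a v)

/-- In-neighbourhood. -/
def inNbr [Fintype V] (A : V → V → Bool) (a : V) : Finset V :=
  univ.filter (fun v => A v a)

/-- Neighbourhood with a sign: `true` = out, `false` = in. -/
def nbr [Fintype V] (A : V → V → Bool) (sign : Bool) (a : V) : Finset V :=
  if sign then outNbr A a else inNbr A a

/-- Total degree (out-degree plus in-degree). -/
def totalDeg [Fintype V] (A : V → V → Bool) (a : V) : ℕ :=
  (outNbr A a).card + (inNbr A a).card

/-- Maximum total degree `Δ`. -/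
def maxDeg [Fintype V] (A : V → V → Bool) : ℕ :=
  univ.sup (totalDeg A)

/-- Second largest element `Δ₂` of the multiset of total degrees. -/
def secondMaxDeg [Fintype V] (A : V → V → Bool) : ℕ :=
  (((univ : Finset V).val.map (totalDeg A)).erase (maxDeg A)).sup

/-- Loopless digraph. -/
def Loopless (A : V → V → Bool) : Prop := ∀ v, ¬ A v v

/-- Antidirected digraph: no directed path with two arcs. -/
def Antidirected (A : V → V → Bool) : Prop := ∀ x y z, A x y → A y z → False

/-- The underlying (undirected) simple graph of a digraph. -/
def underG (A : V → V → Bool) : SimpleGraph V :=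
  SimpleGraph.fromRel (fun x y => A x y)

/-- `𝒦_{2,s}`-freeness: no two distinct vertices `a`, `b` together with signs and `s`
distinct vertices (all different from `a` and `b`) lying in both signed neighbourhoods. -/
def K2sFree [Fintype V] [DecidableEq V] (A : V → V → Bool) (s : ℕ) : Prop :=
  ¬ ∃ (a b : V) (sa sb : Bool) (S : Finset V), a ≠ b ∧ S.card = s ∧
      a ∉ S ∧ b ∉ S ∧ S ⊆ nbr A sa a ∩ nbr A sb b

/-- `T` embeds in `A`: there is an injective arc-preserving map. -/
def Embeds (T : W → W → Bool) (A : V → V → Bool) : Prop :=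
  ∃ f : W → V, Function.Injective f ∧ ∀ x y, T x y → A (f x) (f y)

/-- Vertices of positive out-degree. -/
def outVerts [Fintype V] (A : V → V → Bool) : Finset V :=
  univ.filter (fun v => (outNbr A v).card ≠ 0)

/-- Vertices of positive in-degree. -/
def inVerts [Fintype V] (A : V → V → Bool) : Finset V :=
  univ.filter (fun v => (inNbr A v).card ≠ 0)

/-- A caterpillar: a tree with a path such that every vertex is on the path
or adjacent to it. -/
def IsCaterpillarG {X : Type*} (G : SimpleGraph X) : Prop :=
  G.IsTree ∧ ∃ (x y : X) (P : G.Walk x y), P.IsPath ∧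
    ∀ v, v ∈ P.support ∨ ∃ w ∈ P.support, G.Adj v w

/-- Minimum pseudo-semidegree at least `m`: at least one arc, and every
out-degree and in-degree is `0` or at least `m`. -/
def MinPseudoSemidegGe [Fintype V] (A : V → V → Bool) (m : ℕ) : Prop :=
  0 < arcCount A ∧ (∀ v, (outNbr A v).card = 0 ∨ m ≤ (outNbr A v).card) ∧
    (∀ v, (inNbr A v).card = 0 ∨ m ≤ (inNbr A v).card)

/-- `D'` is a subdigraph of `D` with vertex set `S`. -/
def SubdigraphOn (D : V → V → Bool) (S : Finset V) (D' : V → V → Bool) : Prop :=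
  ∀ x y, D' x y → D x y ∧ x ∈ S ∧ y ∈ S

/-- The vertex set of the double broom `B_{uv}(T)`: the path joining `u` and `v`
together with all neighbours of `u` and all neighbours of `v`. -/
def broomSet [Fintype W] [DecidableEq W] (T : W → W → Bool) {u v : W}
    (p : (underG T).Walk u v) : Finset W :=
  p.support.toFinset ∪ (outNbr T u ∪ inNbr T u) ∪ (outNbr T v ∪ inNbr T v)

/-- `z` lies strictly after `x` and strictly before `y` in clockwise (cyclic) order
on `Fin n`. -/
def cycBetween {n : ℕ} (x y z : Fin n) : Prop :=
  if x < y then x < z ∧ z < y else x < z ∨ z < y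

/-- An arc `pq` of the convex digraph `A` on `Fin n` is good for the antidirected
caterpillar `T` with final vertex `u`, its spine neighbour `v`, and spine with
`plen` edges (so `plen + 1` spine vertices). -/
def GoodArc {n : ℕ} (A : Fin n → Fin n → Bool) (T : W → W → Bool)
    (u v : W) (plen : ℕ) (pq : Fin n × Fin n) : Prop :=
  ∃ f : W → Fin n, Function.Injective f ∧ (∀ x y, T x y → A (f x) (f y)) ∧
    ((T v u = true ∧ (f v, f u) = pq) ∨ (T u v = true ∧ (f u, f v) = pq)) ∧
    (∀ z : Fin n,
      (plen % 2 = 0 → cycBetween (f u) (f v) z → z ∉ Set.range f) ∧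
      (plen % 2 = 1 → z ≠ f u → z ≠ f v → ¬ cycBetween (f u) (f v) z →
        z ∉ Set.range f))

/-- Number of edges of a bipartite graph with parts `α`, `β`. -/
def bipArcCount {α β : Type*} [Fintype α] [Fintype β] (E : α → β → Bool) : ℕ :=
  ((univ : Finset (α × β)).filter (fun p => E p.1 p.2)).card

/-- Degree of a vertex of the `α` part. -/
def bipDegA {α β : Type*} [Fintype β] (E : α → β → Bool) (a : α) : ℕ :=
  (univ.filter (fun b => E a b)).card

/-- Degree of a vertex of the `β` part. -/
def bipDegB {α β : Type*} [Fintype α] (E : α → β → Bool) (b : β) : ℕ :=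
  (univ.filter (fun a => E a b)).card

end Defs

section Aux5
variable {V : Type*} [Fintype V] [DecidableEq V]

private lemma arcCount_eq_sum_out (A : V → V → Bool) :
    arcCount A = ∑ x, (outNbr A x).card := by
  rw [arcCount, Finset.card_filter, ← Finset.univ_product_univ, Finset.sum_product]
  refine Finset.sum_congr rfl fun x _ => ?_
  rw [outNbr, Finset.card_filter]

private lemma arcCount_eq_sum_in (A : V → V → Bool) :
    arcCount A = ∑ y, (inNbr A y).card := by
  rw [arcCount, Finset.card_filter, ← Finset.univ_product_univ, Finset.sum_product,
    Finset.sum_comm]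
  refine Finset.sum_congr rfl fun y _ => ?_
  rw [inNbr, Finset.card_filter]

private lemma delOut (A : V → V → Bool) (v : V) :
    arcCount (fun x y => A x y && !(decide (x = v))) + (outNbr A v).card = arcCount A := by
  rw [arcCount_eq_sum_out, arcCount_eq_sum_out]
  have h1 : ∀ x, outNbr (fun x y => A x y && !(decide (x = v))) x
      = if x = v then (∅ : Finset V) else outNbr A x := by
    intro x
    by_cases hx : x = v <;> simp [outNbr, hx]
  rw [← Finset.sum_erase_add _ _ (Finset.mem_univ v),
    ← Finset.sum_erase_add Finset.univ (fun x => (outNbr A x).card) (Finset.mem_univ v)]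
  have h2 : ∀ x ∈ Finset.univ.erase v,
      (outNbr (fun x y => A x y && !(decide (x = v))) x).card = (outNbr A x).card := by
    intro x hx
    rw [h1 x, if_neg (Finset.mem_erase.1 hx).1]
  rw [Finset.sum_congr rfl h2, h1 v, if_pos rfl]
  simp [add_assoc]

private lemma delIn (A : V → V → Bool) (v : V) :
    arcCount (fun x y => A x y && !(decide (y = v))) + (inNbr A v).card = arcCount A := by
  rw [arcCount_eq_sum_in, arcCount_eq_sum_in]
  have h1 : ∀ y, inNbr (fun x y => A x y && !(decide (y = v))) y
      = if y = v then (∅ : Finset V) else inNbr A y := by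
    intro y
    by_cases hy : y = v <;> simp [inNbr, hy]
  rw [← Finset.sum_erase_add _ _ (Finset.mem_univ v),
    ← Finset.sum_erase_add Finset.univ (fun y => (inNbr A y).card) (Finset.mem_univ v)]
  have h2 : ∀ y ∈ Finset.univ.erase v,
      (inNbr (fun x y => A x y && !(decide (y = v))) y).card = (inNbr A y).card := by
    intro y hy
    rw [h1 y, if_neg (Finset.mem_erase.1 hy).1]
  rw [Finset.sum_congr rfl h2, h1 v, if_pos rfl]
  simp [add_assoc]

private lemma outNbr_mono {A B : V → V → Bool} (h : ∀ x y, A x y → B x y) (v : V) :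
    outNbr A v ⊆ outNbr B v := by
  intro y hy
  simp only [outNbr, Finset.mem_filter, Finset.mem_univ, true_and] at hy ⊢
  exact h v y hy

private lemma inNbr_mono {A B : V → V → Bool} (h : ∀ x y, A x y → B x y) (v : V) :
    inNbr A v ⊆ inNbr B v := by
  intro y hy
  simp only [inNbr, Finset.mem_filter, Finset.mem_univ, true_and] at hy ⊢
  exact h y v hy

private lemma outVerts_mono {A B : V → V → Bool} (h : ∀ x y, A x y → B x y) :
    outVerts A ⊆ outVerts B := by
  intro v hv
  simp only [outVerts, Finset.mem_filter, Finset.mem_univ, true_and] at hv ⊢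
  intro h0
  exact hv (Nat.le_antisymm (h0 ▸ Finset.card_le_card (outNbr_mono h v)) (Nat.zero_le _))

private lemma inVerts_mono {A B : V → V → Bool} (h : ∀ x y, A x y → B x y) :
    inVerts A ⊆ inVerts B := by
  intro v hv
  simp only [inVerts, Finset.mem_filter, Finset.mem_univ, true_and] at hv ⊢
  intro h0
  exact hv (Nat.le_antisymm (h0 ▸ Finset.card_le_card (inNbr_mono h v)) (Nat.zero_le _))

end Aux5

/-- Every digraph with more than `(k−1)·|V(D)|` arcs has a subdigraph with at
least one arc and minimum pseudo-semidegree at least `k/2`. -/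
theorem stmt_5 (k : ℕ) (hk : 0 < k)
    {V : Type*} [Fintype V] [DecidableEq V]
    (D : V → V → Bool) (hloop : Loopless D)
    (harcs : (k - 1) * Fintype.card V < arcCount D) :
    ∃ D' : V → V → Bool, (∀ x y, D' x y → D x y) ∧ 0 < arcCount D' ∧
      (∀ v, (outNbr D' v).card = 0 ∨ k ≤ 2 * (outNbr D' v).card) ∧
      (∀ v, (inNbr D' v).card = 0 ∨ k ≤ 2 * (inNbr D' v).card) := by
  classical
  set n := Fintype.card V with hn
  set m : ℕ := (k - 1) / 2 with hm
  set C : ℤ := (n : ℤ) * n + 1 with hC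
  have hC1 : (1 : ℤ) ≤ C := by
    have h := mul_nonneg (Int.natCast_nonneg n) (Int.natCast_nonneg n)
    rw [hC]; linarith
  set g : (V → V → Bool) → ℤ := fun A =>
    C * ((arcCount A : ℤ) - (m : ℤ) * (((outVerts A).card : ℤ) + ((inVerts A).card : ℤ)))
      - (arcCount A : ℤ) with hg
  set S : Finset (V → V → Bool) := Finset.univ.filter (fun A => ∀ x y, A x y → D x y)
    with hS
  have hDS : D ∈ S := by simp [hS]
  obtain ⟨A, hAS, hmax⟩ := S.exists_max_image g ⟨D, hDS⟩
  have hAsub : ∀ x y, A x y → D x y := by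
    have := hAS; simp only [hS, Finset.mem_filter, Finset.mem_univ, true_and] at this
    exact this
  -- bounds
  have hcard_le : ∀ B : V → V → Bool, arcCount B ≤ n * n := by
    intro B
    calc arcCount B ≤ (Finset.univ : Finset (V × V)).card := Finset.card_filter_le _ _
    _ = n * n := by simp [Finset.card_univ, Fintype.card_prod, hn]
  have houtle : (outVerts D).card ≤ n := by
    calc (outVerts D).card ≤ (Finset.univ : Finset V).card := Finset.card_filter_le _ _
    _ = n := by simp [hn]
  have hinle : (inVerts D).card ≤ n := by
    calc (inVerts D).card ≤ (Finset.univ : Finset V).card := Finset.card_filter_le _ _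
    _ = n := by simp [hn]
  have h2m : 2 * m ≤ k - 1 := by
    rw [hm]; omega
  -- g D ≥ 1
  have hPsiD : (1 : ℤ) ≤ (arcCount D : ℤ) -
      (m : ℤ) * (((outVerts D).card : ℤ) + ((inVerts D).card : ℤ)) := by
    have h1 : (m : ℤ) * (((outVerts D).card : ℤ) + ((inVerts D).card : ℤ))
        ≤ (m : ℤ) * (2 * n) := by
      have : ((outVerts D).card : ℤ) + ((inVerts D).card : ℤ) ≤ 2 * n := by
        exact_mod_cast by omega
      exact mul_le_mul_of_nonneg_left this (Int.natCast_nonneg m)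
    have h2 : (m : ℤ) * (2 * n) ≤ ((k - 1 : ℕ) : ℤ) * n := by
      have : m * (2 * n) ≤ (k - 1) * n := by
        calc m * (2 * n) = (2 * m) * n := by ring
        _ ≤ (k - 1) * n := Nat.mul_le_mul_right _ h2m
      exact_mod_cast this
    have h3 : ((k - 1 : ℕ) : ℤ) * n < (arcCount D : ℤ) := by exact_mod_cast harcs
    linarith
  have hgD : (1 : ℤ) ≤ g D := by
    have h4 : (arcCount D : ℤ) ≤ (n : ℤ) * n := by exact_mod_cast hcard_le D
    have h5 : C * 1 ≤ C * ((arcCount D : ℤ) -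
        (m : ℤ) * (((outVerts D).card : ℤ) + ((inVerts D).card : ℤ))) :=
      mul_le_mul_of_nonneg_left hPsiD (by linarith)
    simp only [hg]
    rw [hC] at h5 ⊢
    linarith
  have hgA : (1 : ℤ) ≤ g A := le_trans hgD (hmax D hDS)
  -- arcCount A > 0
  have harcA : 0 < arcCount A := by
    by_contra h0
    push_neg at h0
    have harc0 : arcCount A = 0 := Nat.le_zero.1 h0
    have hsumo : ∑ x, (outNbr A x).card = 0 := by rw [← arcCount_eq_sum_out]; exact harc0
    have hsumi : ∑ y, (inNbr A y).card = 0 := by rw [← arcCount_eq_sum_in]; exact harc0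
    have hout0 : ∀ x, (outNbr A x).card = 0 := fun x =>
      Finset.sum_eq_zero_iff.1 hsumo x (Finset.mem_univ x)
    have hin0 : ∀ y, (inNbr A y).card = 0 := fun y =>
      Finset.sum_eq_zero_iff.1 hsumi y (Finset.mem_univ y)
    have hov : outVerts A = ∅ := by
      rw [outVerts, Finset.filter_eq_empty_iff]
      intro v _; simp [hout0 v]
    have hiv : inVerts A = ∅ := by
      rw [inVerts, Finset.filter_eq_empty_iff]
      intro v _; simp [hin0 v]
    have : g A = 0 := by simp [hg, harc0, hov, hiv]
    omega
  refine ⟨A, hAsub, harcA, ?_, ?_⟩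
  · -- out-degrees
    intro v
    by_contra hbad
    push_neg at hbad
    obtain ⟨hne, hlt⟩ := hbad
    set c := (outNbr A v).card with hc
    have hc1 : 1 ≤ c := Nat.one_le_iff_ne_zero.2 hne
    have hcm : c ≤ m := by rw [hm]; omega
    set A' : V → V → Bool := fun x y => A x y && !(decide (x = v)) with hA'
    have hA'sub : ∀ x y, A' x y → A x y := by
      intro x y h; simp only [hA', Bool.and_eq_true] at h; exact h.1
    have hA'S : A' ∈ S := by
      simp only [hS, Finset.mem_filter, Finset.mem_univ, true_and]
      intro x y h; exact hAsub x y (hA'sub x y h)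
    have harc' : arcCount A' + c = arcCount A := delOut A v
    -- outVerts A' ⊆ (outVerts A).erase v
    have hsub : outVerts A' ⊆ (outVerts A).erase v := by
      intro w hw
      have hwA : w ∈ outVerts A := outVerts_mono hA'sub hw
      rw [Finset.mem_erase]
      refine ⟨?_, hwA⟩
      rintro rfl
      simp only [outVerts, Finset.mem_filter, Finset.mem_univ, true_and] at hw
      apply hw
      rw [Finset.card_eq_zero, Finset.eq_empty_iff_forall_notMem]
      intro y hy
      simp [outNbr, hA'] at hy
    have hvmem : v ∈ outVerts A := by
      simp only [outVerts, Finset.mem_filter, Finset.mem_univ, true_and]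
      exact hne
    have hcards : (outVerts A').card + 1 ≤ (outVerts A).card := by
      have h1 := Finset.card_le_card hsub
      rw [Finset.card_erase_of_mem hvmem] at h1
      have := Finset.card_pos.2 ⟨v, hvmem⟩
      omega
    have hicards : (inVerts A').card ≤ (inVerts A).card :=
      Finset.card_le_card (inVerts_mono hA'sub)
    -- contradiction with maximality
    have hgle := hmax A' hA'S
    simp only [hg] at hgle
    have e1 : (arcCount A' : ℤ) + c = arcCount A := by exact_mod_cast harc'
    have e2 : ((outVerts A').card : ℤ) + 1 ≤ ((outVerts A).card : ℤ) := by
      exact_mod_cast hcards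
    have e3 : ((inVerts A').card : ℤ) ≤ ((inVerts A).card : ℤ) := by
      exact_mod_cast hicards
    have e4 : (c : ℤ) ≤ m := by exact_mod_cast hcm
    have e5 : (1 : ℤ) ≤ c := by exact_mod_cast hc1
    have hX : (0 : ℤ) ≤
        ((arcCount A' : ℤ) - (m : ℤ) * (((outVerts A').card : ℤ) + ((inVerts A').card : ℤ)))
        - ((arcCount A : ℤ) - (m : ℤ) * (((outVerts A).card : ℤ) + ((inVerts A).card : ℤ))) := by
      have hmm : (c : ℤ) ≤ (m : ℤ) *
          ((((outVerts A).card : ℤ) + ((inVerts A).card : ℤ))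
            - (((outVerts A').card : ℤ) + ((inVerts A').card : ℤ))) := by
        calc (c : ℤ) ≤ (m : ℤ) := e4
        _ = (m : ℤ) * 1 := (mul_one _).symm
        _ ≤ _ := mul_le_mul_of_nonneg_left (by linarith) (Int.natCast_nonneg m)
      linarith
    have hCX : C * ((arcCount A : ℤ)
          - (m : ℤ) * (((outVerts A).card : ℤ) + ((inVerts A).card : ℤ)))
        ≤ C * ((arcCount A' : ℤ)
          - (m : ℤ) * (((outVerts A').card : ℤ) + ((inVerts A').card : ℤ))) := by
      have h0 := mul_nonneg (by linarith : (0:ℤ) ≤ C) hX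
      rw [mul_sub] at h0
      linarith
    linarith
  · -- in-degrees
    intro v
    by_contra hbad
    push_neg at hbad
    obtain ⟨hne, hlt⟩ := hbad
    set c := (inNbr A v).card with hc
    have hc1 : 1 ≤ c := Nat.one_le_iff_ne_zero.2 hne
    have hcm : c ≤ m := by rw [hm]; omega
    set A' : V → V → Bool := fun x y => A x y && !(decide (y = v)) with hA'
    have hA'sub : ∀ x y, A' x y → A x y := by
      intro x y h; simp only [hA', Bool.and_eq_true] at h; exact h.1
    have hA'S : A' ∈ S := by
      simp only [hS, Finset.mem_filter, Finset.mem_univ, true_and]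
      intro x y h; exact hAsub x y (hA'sub x y h)
    have harc' : arcCount A' + c = arcCount A := delIn A v
    have hsub : inVerts A' ⊆ (inVerts A).erase v := by
      intro w hw
      have hwA : w ∈ inVerts A := inVerts_mono hA'sub hw
      rw [Finset.mem_erase]
      refine ⟨?_, hwA⟩
      rintro rfl
      simp only [inVerts, Finset.mem_filter, Finset.mem_univ, true_and] at hw
      apply hw
      rw [Finset.card_eq_zero, Finset.eq_empty_iff_forall_notMem]
      intro y hy
      simp [inNbr, hA'] at hy
    have hvmem : v ∈ inVerts A := by
      simp only [inVerts, Finset.mem_filter, Finset.mem_univ, true_and]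
      exact hne
    have hcards : (inVerts A').card + 1 ≤ (inVerts A).card := by
      have h1 := Finset.card_le_card hsub
      rw [Finset.card_erase_of_mem hvmem] at h1
      have := Finset.card_pos.2 ⟨v, hvmem⟩
      omega
    have hocards : (outVerts A').card ≤ (outVerts A).card :=
      Finset.card_le_card (outVerts_mono hA'sub)
    have hgle := hmax A' hA'S
    simp only [hg] at hgle
    have e1 : (arcCount A' : ℤ) + c = arcCount A := by exact_mod_cast harc'
    have e2 : ((inVerts A').card : ℤ) + 1 ≤ ((inVerts A).card : ℤ) := by
      exact_mod_cast hcards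
    have e3 : ((outVerts A').card : ℤ) ≤ ((outVerts A).card : ℤ) := by
      exact_mod_cast hocards
    have e4 : (c : ℤ) ≤ m := by exact_mod_cast hcm
    have e5 : (1 : ℤ) ≤ c := by exact_mod_cast hc1
    have hX : (0 : ℤ) ≤
        ((arcCount A' : ℤ) - (m : ℤ) * (((outVerts A').card : ℤ) + ((inVerts A').card : ℤ)))
        - ((arcCount A : ℤ) - (m : ℤ) * (((outVerts A).card : ℤ) + ((inVerts A).card : ℤ))) := by
      have hmm : (c : ℤ) ≤ (m : ℤ) *
          ((((outVerts A).card : ℤ) + ((inVerts A).card : ℤ))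
            - (((outVerts A').card : ℤ) + ((inVerts A').card : ℤ))) := by
        calc (c : ℤ) ≤ (m : ℤ) := e4
        _ = (m : ℤ) * 1 := (mul_one _).symm
        _ ≤ _ := mul_le_mul_of_nonneg_left (by linarith) (Int.natCast_nonneg m)
      linarith
    have hCX : C * ((arcCount A : ℤ)
          - (m : ℤ) * (((outVerts A).card : ℤ) + ((inVerts A).card : ℤ)))
        ≤ C * ((arcCount A' : ℤ)
          - (m : ℤ) * (((outVerts A').card : ℤ) + ((inVerts A').card : ℤ))) := by
      have h0 := mul_nonneg (by linarith : (0:ℤ) ≤ C) hX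
      rw [mul_sub] at h0
      linarith
    linarith
end

section
/- Let k, n be positive integers, let T be an antidirected caterpillar with k arcs, and let D be a convex digraph of order n. Then D contains at least a(D) − (k−1)·n arcs that are good for T. -/
open Finset

namespace CatAux
open SimpleGraph

def dlt {n : ℕ} (x z : Fin n) : ℕ := if x.val ≤ z.val then z.val - x.val else z.val + n - x.val

variable {n : ℕ} {x y z b c : Fin n}

lemma dlt_lt (x z : Fin n) : dlt x z < n := by
  have := x.isLt; have := z.isLt; unfold dlt; split <;> omega

lemma dlt_eq_zero_iff : dlt x z = 0 ↔ x = z := by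
  have := x.isLt; have := z.isLt
  constructor
  · intro h; unfold dlt at h; split at h <;> [exact Fin.ext (by omega); omega]
  · rintro rfl; simp [dlt]

lemma dlt_inj (h : dlt b x = dlt b z) : x = z := by
  have := x.isLt; have := z.isLt; have := b.isLt
  unfold dlt at h; apply Fin.ext; split at h <;> split at h <;> omega

lemma cycBetween_iff (hxy : x ≠ y) : cycBetween x y z ↔ 0 < dlt x z ∧ dlt x z < dlt x y := by
  have := x.isLt; have := y.isLt; have := z.isLt
  have hxy' : x.val ≠ y.val := fun h => hxy (Fin.ext h)
  unfold cycBetween dlt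
  simp only [Fin.lt_def]
  split <;> split <;> split <;> omega

lemma cycBetween_swap (hcb : c ≠ b) : cycBetween c b z ↔ dlt b c < dlt b z := by
  have := b.isLt; have := c.isLt; have := z.isLt
  have h1 : c.val ≠ b.val := fun h => hcb (Fin.ext h)
  unfold cycBetween dlt
  simp only [Fin.lt_def]
  split <;> split <;> split <;> omega


variable {n : ℕ}

def bOf (bfst : Bool) (p : Fin n × Fin n) : Fin n := if bfst then p.1 else p.2
def cOf (bfst : Bool) (p : Fin n × Fin n) : Fin n := if bfst then p.2 else p.1
def inR (osel : Bool) (b c z : Fin n) : Prop :=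
  if osel then 0 < dlt b z ∧ dlt b z < dlt b c else dlt b c < dlt b z
def mkArc (bfst : Bool) (p : Fin n × Fin n) (z : Fin n) : Fin n × Fin n :=
  if bfst then (p.1, z) else (z, p.2)

lemma bc_recover {bfst : Bool} {p q : Fin n × Fin n}
    (h1 : bOf bfst p = bOf bfst q) (h2 : cOf bfst p = cOf bfst q) : p = q := by
  cases bfst <;> simp [bOf, cOf] at h1 h2 <;> exact Prod.ext (by simp [*]) (by simp [*])

lemma countLemma (A : Fin n → Fin n → Bool) (hA : Loopless A)
    (S' S : Set (Fin n × Fin n)) (bfst osel : Bool)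
    (harc' : ∀ p ∈ S', A p.1 p.2 = true)
    (hext : ∀ p ∈ S', ∀ z : Fin n,
      (if bfst then A (bOf bfst p) z else A z (bOf bfst p)) = true →
      inR osel (bOf bfst p) (cOf bfst p) z → mkArc bfst p z ∈ S) :
    S'.ncard ≤ S.ncard + n := by
  classical
  set N : (Fin n × Fin n) → Finset (Fin n) := fun p => Finset.univ.filter
    (fun z => (if bfst then A (bOf bfst p) z else A z (bOf bfst p)) = true ∧
      inR osel (bOf bfst p) (cOf bfst p) z) with hN
  have hNmem : ∀ p z, z ∈ N p ↔ ((if bfst then A (bOf bfst p) z else A z (bOf bfst p)) = true ∧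
      inR osel (bOf bfst p) (cOf bfst p) z) := by
    intro p z; simp [hN]
  set key : (Fin n × Fin n) → Fin n → ℕ := fun p z =>
    if osel then n - dlt (bOf bfst p) z else dlt (bOf bfst p) z with hkey
  have spec : ∀ p, (N p).Nonempty → ∃ z ∈ N p, ∀ z' ∈ N p, key p z ≤ key p z' :=
    fun p h => Finset.exists_min_image (N p) (key p) h
  set zsel : ∀ p, (N p).Nonempty → Fin n := fun p h => (spec p h).choose with hzsel
  have zsel_mem : ∀ p h, zsel p h ∈ N p := fun p h => (spec p h).choose_spec.1
  have zsel_min : ∀ p h, ∀ z' ∈ N p, key p (zsel p h) ≤ key p z' :=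
    fun p h => (spec p h).choose_spec.2
  -- basic facts
  have hbc : ∀ p ∈ S', bOf bfst p ≠ cOf bfst p := by
    intro p hp
    have := harc' p hp
    have hne : p.1 ≠ p.2 := by rintro h; rw [h] at this; exact hA p.2 this
    cases bfst <;> simpa [bOf, cOf, eq_comm] using hne
  have hcval : ∀ p ∈ S', ∀ q ∈ S', bOf bfst q = bOf bfst p →
      (if bfst then A (bOf bfst p) (cOf bfst q) else A (cOf bfst q) (bOf bfst p)) = true := by
    intro p hp q hq hb
    have := harc' q hq
    cases bfst <;> simp [bOf, cOf] at hb ⊢ <;> rw [← hb] <;> exact this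
  -- the core asymmetric fact
  have core : ∀ p ∈ S', ∀ q ∈ S', bOf bfst q = bOf bfst p →
      dlt (bOf bfst p) (cOf bfst p) < dlt (bOf bfst p) (cOf bfst q) →
      (if osel then (N q).Nonempty else (N p).Nonempty) ∧
      ∀ (h1 : (N p).Nonempty) (h2 : (N q).Nonempty),
        dlt (bOf bfst p) (zsel p h1) < dlt (bOf bfst p) (zsel q h2) := by
    intro p hp q hq hb hlt
    have hcp0 : 0 < dlt (bOf bfst p) (cOf bfst p) := by
      rcases Nat.eq_zero_or_pos (dlt (bOf bfst p) (cOf bfst p)) with h | h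
      · exact absurd (dlt_eq_zero_iff.mp h) (hbc p hp)
      · exact h
    cases osel with
    | true =>
      have hmemq : cOf bfst p ∈ N q := by
        rw [hNmem]
        refine ⟨hcval q hq p hp hb.symm, ?_⟩
        simp only [inR, if_pos rfl, hb]
        exact ⟨hcp0, hlt⟩
      refine ⟨by simp [Finset.Nonempty]; exact ⟨_, hmemq⟩, ?_⟩
      intro h1 h2
      have hmin := zsel_min q h2 _ hmemq
      have hzq := (hNmem q _).mp (zsel_mem q h2)
      have hzp := (hNmem p _).mp (zsel_mem p h1)
      simp only [hkey, reduceIte, hb] at hmin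
      have d1 := dlt_lt (bOf bfst p) (zsel q h2)
      have d2 := dlt_lt (bOf bfst p) (cOf bfst p)
      simp only [inR, reduceIte, hb] at hzq hzp
      omega
    | false =>
      have hmemp : cOf bfst q ∈ N p := by
        rw [hNmem]
        exact ⟨hcval p hp q hq hb, by simp only [inR]; simpa using hlt⟩
      refine ⟨by simp [Finset.Nonempty]; exact ⟨_, hmemp⟩, ?_⟩
      intro h1 h2
      have hmin := zsel_min p h1 _ hmemp
      have hzq := (hNmem q _).mp (zsel_mem q h2)
      have hzp := (hNmem p _).mp (zsel_mem p h1)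
      simp only [hkey, Bool.false_eq_true, if_false, hb] at hmin
      simp only [inR, Bool.false_eq_true, if_false, hb] at hzq hzp
      omega
  -- the injection
  have hg : ∀ (p : Fin n × Fin n), p ∈ S' → ∀ (h : (N p).Nonempty), mkArc bfst p (zsel p h) ∈ S := by
    intro p hp h
    have := (hNmem p _).mp (zsel_mem p h)
    exact hext p hp _ this.1 this.2
  set g : {p // p ∈ S'} → {q // q ∈ S} ⊕ Fin n := fun x =>
    if h : (N x.1).Nonempty then Sum.inl ⟨mkArc bfst x.1 (zsel x.1 h), hg x.1 x.2 h⟩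
    else Sum.inr (bOf bfst x.1) with hgdef
  have hginj : Function.Injective g := by
    rintro ⟨p, hp⟩ ⟨q, hq⟩ h
    simp only [hgdef] at h
    ext1
    by_contra hpq
    by_cases hNp : (N p).Nonempty <;> by_cases hNq : (N q).Nonempty <;>
      simp only [hNp, hNq, dif_pos, dif_neg, not_false_iff] at h
    · -- both inl
      simp only [Sum.inl.injEq, Subtype.mk.injEq] at h
      have hbz : bOf bfst p = bOf bfst q ∧ zsel p hNp = zsel q hNq := by
        cases bfst
        · simp only [mkArc, bOf, Bool.false_eq_true, if_false, Prod.mk.injEq] at h ⊢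
          exact ⟨h.2, h.1⟩
        · simp only [mkArc, bOf, if_true, Prod.mk.injEq] at h ⊢
          exact ⟨h.1, h.2⟩
      have hcne : cOf bfst p ≠ cOf bfst q := fun hc => hpq (bc_recover hbz.1 hc)
      have hdne : dlt (bOf bfst p) (cOf bfst p) ≠ dlt (bOf bfst p) (cOf bfst q) := by
        intro hd; exact hcne (dlt_inj hd)
      rcases Nat.lt_or_ge (dlt (bOf bfst p) (cOf bfst p)) (dlt (bOf bfst p) (cOf bfst q))
        with hlt | hge
      · have := (core p hp q hq hbz.1.symm hlt).2 hNp hNq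
        rw [hbz.2] at this; omega
      · have hlt' : dlt (bOf bfst q) (cOf bfst q) < dlt (bOf bfst q) (cOf bfst p) := by
          rw [← hbz.1]; omega
        have := (core q hq p hp hbz.1 hlt').2 hNq hNp
        rw [hbz.2] at this; omega
    · cases h
    · cases h
    · -- both inr
      simp only [Sum.inr.injEq] at h
      have hcne : cOf bfst p ≠ cOf bfst q := fun hc => hpq (bc_recover h hc)
      have hdne : dlt (bOf bfst p) (cOf bfst p) ≠ dlt (bOf bfst p) (cOf bfst q) := by
        intro hd; exact hcne (dlt_inj hd)
      rcases Nat.lt_or_ge (dlt (bOf bfst p) (cOf bfst p)) (dlt (bOf bfst p) (cOf bfst q))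
        with hlt | hge
      · have := (core p hp q hq h.symm hlt).1
        cases osel <;> simp at this
        · exact hNp this
        · exact hNq this
      · have hlt' : dlt (bOf bfst q) (cOf bfst q) < dlt (bOf bfst q) (cOf bfst p) := by
          rw [← h]; omega
        have := (core q hq p hp h hlt').1
        cases osel <;> simp at this
        · exact hNq this
        · exact hNp this
  have e1 : Nat.card {p // p ∈ S'} ≤ Nat.card ({q // q ∈ S} ⊕ Fin n) :=
    Nat.card_le_card_of_injective g hginj
  rw [Nat.card_sum] at e1
  have e2 : Nat.card {p // p ∈ S'} = S'.ncard := Nat.card_coe_set_eq _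
  have e3 : Nat.card {q // q ∈ S} = S.ncard := Nat.card_coe_set_eq _
  have e4 : Nat.card (Fin n) = n := Nat.card_eq_fintype_card.trans (Fintype.card_fin n)
  omega

open SimpleGraph

variable {W : Type*}

lemma underG_adj {T : W → W → Bool} {x y : W} :
    (underG T).Adj x y ↔ x ≠ y ∧ (T x y = true ∨ T y x = true) := by
  simp [underG, SimpleGraph.fromRel_adj]

lemma anti_irrefl {T : W → W → Bool} (hT : Antidirected T) (x : W) : ¬ T x x = true :=
  fun h => hT x x x h h

lemma anti_not_both {T : W → W → Bool} (hT : Antidirected T) {x y : W} :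
    T x y = true → T y x = true → False := fun h1 h2 => hT x y x h1 h2

/-- every cons walk is a concat -/
lemma cons_eq_concat {G : SimpleGraph W} :
    ∀ {a b z : W} (p : G.Walk a b) (h : G.Adj z a),
      ∃ (c : W) (q : G.Walk z c) (h' : G.Adj c b), Walk.cons h p = q.concat h' := by
  intro a b z p
  induction p generalizing z with
  | nil => exact fun h => ⟨z, Walk.nil, h, (Walk.concat_nil h).symm⟩
  | @cons c d b h2 q ih =>
    intro h
    obtain ⟨e, q', h', heq⟩ := ih h2
    exact ⟨e, Walk.cons h q', h', by rw [Walk.concat_cons, ← heq]⟩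

lemma exists_concat {G : SimpleGraph W} {a b : W} (p : G.Walk a b) (hne : a ≠ b) :
    ∃ (c : W) (q : G.Walk a c) (h : G.Adj c b), p = q.concat h := by
  cases p with
  | nil => exact absurd rfl hne
  | cons h q => exact cons_eq_concat q h

lemma path_loop_nil {G : SimpleGraph W} {a : W} {p : G.Walk a a} (hp : p.IsPath) :
    p = Walk.nil := by
  cases p with
  | nil => rfl
  | cons h q =>
    exfalso
    have h1 := hp.support_nodup
    rw [Walk.support_cons] at h1
    exact (List.nodup_cons.mp h1).1 q.end_mem_support

lemma u_not_in_Q {G : SimpleGraph W} {w v u : W} {Q : G.Walk w v} {hadj : G.Adj v u}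
    (hP : (Q.concat hadj).IsPath) : u ∉ Q.support := by
  have h1 := hP.support_nodup
  rw [Walk.support_concat, List.nodup_append] at h1
  intro hu
  exact h1.2.2 u hu u (by simp) rfl

lemma q_isPath {G : SimpleGraph W} {w v u : W} {Q : G.Walk w v} {hadj : G.Adj v u}
    (hP : (Q.concat hadj).IsPath) : Q.IsPath := by
  have h0 := hP.reverse
  rw [Walk.reverse_concat] at h0
  have h2 := h0.of_cons
  simpa using h2.reverse

lemma leaf_unique [DecidableEq W] {T : W → W → Bool} (htree : (underG T).IsTree)
    {w v u : W} {Q : (underG T).Walk w v} {hadj : (underG T).Adj v u}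
    (hP : (Q.concat hadj).IsPath)
    (hcat : ∀ x : W, x ∈ (Q.concat hadj).support ∨ ∃ y ∈ (Q.concat hadj).support,
      y ≠ w ∧ y ≠ u ∧ (underG T).Adj x y)
    {x : W} (hux : (underG T).Adj u x) : x = v := by
  set P := Q.concat hadj with hPdef
  by_contra hxv
  have hxu : x ≠ u := hux.ne'
  have hPrev : P.reverse = Walk.cons hadj.symm Q.reverse := Walk.reverse_concat Q hadj
  by_cases hxP : x ∈ P.support
  · have hx' : x ∈ P.reverse.support := by rwa [Walk.support_reverse, List.mem_reverse]
    have hp1 : (Walk.cons hux Walk.nil : (underG T).Walk u x).IsPath :=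
      (Walk.cons_isPath_iff _ _).mpr ⟨Walk.IsPath.nil, by simp [hux.ne]⟩
    have hp2 : (P.reverse.takeUntil x hx').IsPath := hP.reverse.takeUntil hx'
    have hpeq := htree.IsAcyclic.path_unique ⟨Walk.cons hux Walk.nil, hp1⟩
      ⟨P.reverse.takeUntil x hx', hp2⟩
    have hweq : (Walk.cons hux Walk.nil : (underG T).Walk u x) = P.reverse.takeUntil x hx' :=
      congrArg Subtype.val hpeq
    have hspec := Walk.take_spec P.reverse hx'
    rw [← hweq, Walk.cons_append, Walk.nil_append] at hspec
    have h2 := hspec.trans hPrev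
    injection h2 with h1 h2 h3
    exact hxv h2
  · rcases hcat x with h | ⟨y, hy, hyw, hyu, hxy⟩
    · exact hxP h
    · have hy' : y ∈ P.reverse.support := by rwa [Walk.support_reverse, List.mem_reverse]
      have hp1 : (Walk.cons hux (Walk.cons hxy Walk.nil) : (underG T).Walk u y).IsPath := by
        rw [Walk.cons_isPath_iff, Walk.cons_isPath_iff]
        refine ⟨⟨Walk.IsPath.nil, by simp [hxy.ne]⟩, ?_⟩
        simp [Ne.symm hxu, Ne.symm hyu]
      have hp2 : (P.reverse.takeUntil y hy').IsPath := hP.reverse.takeUntil hy'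
      have hpeq := htree.IsAcyclic.path_unique ⟨_, hp1⟩ ⟨_, hp2⟩
      have hweq : (Walk.cons hux (Walk.cons hxy Walk.nil) : (underG T).Walk u y)
          = P.reverse.takeUntil y hy' := congrArg Subtype.val hpeq
      have hxmem : x ∈ (P.reverse.takeUntil y hy').support := by
        rw [← hweq]; simp
      have := Walk.support_takeUntil_subset _ hy' hxmem
      rw [Walk.support_reverse, List.mem_reverse] at this
      exact hxP this

open SimpleGraph

variable {W : Type*}

def delV (T : W → W → Bool) (u : W) (x y : {z : W // z ≠ u}) : Bool := T x.1 y.1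

lemma delV_adj {T : W → W → Bool} {u : W} {x y : {z : W // z ≠ u}} :
    (underG (delV T u)).Adj x y ↔ (underG T).Adj x.1 y.1 := by
  rw [underG_adj, underG_adj]
  constructor
  · rintro ⟨h1, h2⟩; exact ⟨fun h => h1 (Subtype.ext h), h2⟩
  · rintro ⟨h1, h2⟩; exact ⟨fun h => h1 (congrArg Subtype.val h), h2⟩

def valHom (T : W → W → Bool) (u : W) : underG (delV T u) →g underG T where
  toFun := Subtype.val
  map_rel' := fun h => delV_adj.mp h

def liftWalk {T : W → W → Bool} {u : W} :
    ∀ {a b : W} (p : (underG T).Walk a b), (∀ x ∈ p.support, x ≠ u) →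
      ∀ (ha : a ≠ u) (hb : b ≠ u), (underG (delV T u)).Walk ⟨a, ha⟩ ⟨b, hb⟩
  | _, _, Walk.nil, _, _, _ => Walk.nil
  | _, _, Walk.cons (v := c) h q, hp, _, hb =>
      Walk.cons (delV_adj.mpr h)
        (liftWalk q (fun x hx => hp x (by simp [hx])) (hp c (by simp)) hb)

lemma liftWalk_map {T : W → W → Bool} {u : W} :
    ∀ {a b : W} (p : (underG T).Walk a b) (hp : ∀ x ∈ p.support, x ≠ u)
      (ha : a ≠ u) (hb : b ≠ u), (liftWalk p hp ha hb).map (valHom T u) = p := by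
  intro a b p
  induction p with
  | nil => intro hp ha hb; rfl
  | cons h q ih =>
    intro hp ha hb
    simp only [liftWalk, Walk.map_cons]
    rw [ih]
    rfl

lemma liftWalk_support {T : W → W → Bool} {u : W} {a b : W} (p : (underG T).Walk a b)
    (hp : ∀ x ∈ p.support, x ≠ u) (ha : a ≠ u) (hb : b ≠ u) {x : {z : W // z ≠ u}} :
    x ∈ (liftWalk p hp ha hb).support ↔ x.1 ∈ p.support := by
  conv_rhs => rw [← liftWalk_map p hp ha hb]
  erw [Walk.support_map]
  constructor
  · intro hx; exact List.mem_map_of_mem hx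
  · intro hx
    rcases List.mem_map.mp hx with ⟨y, hy, hyx⟩
    rwa [Subtype.ext hyx] at hy

lemma liftWalk_length {T : W → W → Bool} {u : W} {a b : W} (p : (underG T).Walk a b)
    (hp : ∀ x ∈ p.support, x ≠ u) (ha : a ≠ u) (hb : b ≠ u) :
    (liftWalk p hp ha hb).length = p.length := by
  conv_rhs => rw [← liftWalk_map p hp ha hb]
  erw [Walk.length_map]

lemma liftWalk_isPath {T : W → W → Bool} {u : W} {a b : W} {p : (underG T).Walk a b}
    (hpath : p.IsPath) (hp : ∀ x ∈ p.support, x ≠ u) (ha : a ≠ u) (hb : b ≠ u) :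
    (liftWalk p hp ha hb).IsPath := by
  apply Walk.IsPath.of_map (f := valHom T u)
  rwa [liftWalk_map]

lemma delV_isTree [DecidableEq W] {T : W → W → Bool} {u vv : W} (htree : (underG T).IsTree)
    (hvu : (underG T).Adj vv u) (hleaf : ∀ x, (underG T).Adj u x → x = vv) :
    (underG (delV T u)).IsTree := by
  constructor
  · rw [connected_iff]
    refine ⟨?_, ⟨⟨vv, hvu.ne⟩⟩⟩
    intro x y
    obtain ⟨pw⟩ := htree.isConnected.preconnected x.1 y.1
    set pp := pw.toPath with hpp
    have hup : u ∉ pp.1.support := by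
      intro hu
      have hx : (x : W) ≠ u := x.2
      have hy : (y : W) ≠ u := y.2
      obtain ⟨c, q, h1, hteq⟩ := exists_concat (pp.1.takeUntil u hu) hx
      have hcv : c = vv := hleaf c h1.symm
      have hv1 : vv ∈ (pp.1.takeUntil u hu).support := by
        rw [hteq, Walk.support_concat]
        exact List.mem_append_left _ (hcv ▸ q.end_mem_support)
      obtain ⟨c2, h2, d2, hdeq⟩ := Walk.exists_eq_cons_of_ne (Ne.symm hy) (pp.1.dropUntil u hu)
      have hc2v : c2 = vv := hleaf c2 h2
      have hv2 : vv ∈ (pp.1.dropUntil u hu).support.tail := by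
        rw [hdeq, Walk.support_cons]
        exact hc2v ▸ d2.start_mem_support
      have hnodup := pp.2.support_nodup
      rw [← Walk.take_spec pp.1 hu, Walk.support_append, List.nodup_append] at hnodup
      exact hnodup.2.2 vv hv1 vv hv2 rfl
    exact ⟨liftWalk pp.1 (fun z hz h => hup (by rwa [h] at hz)) x.2 y.2⟩
  · intro a c hc
    exact htree.IsAcyclic _ ((Walk.map_isCycle_iff_of_injective (f := valHom T u) Subtype.val_injective).mpr hc)

lemma arcCount_delV [Fintype W] [DecidableEq W] {T : W → W → Bool} (hT : Antidirected T)
    {u vv : W} (hdir : T vv u = true ∨ T u vv = true)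
    (hleaf : ∀ x, (underG T).Adj u x → x = vv) :
    arcCount T = arcCount (delV T u) + 1 := by
  classical
  have hvu : vv ≠ u := by
    intro h; subst h; rcases hdir with h | h <;> exact anti_irrefl hT _ h
  unfold arcCount
  rw [← Finset.card_filter_add_card_filter_not
    (p := fun p : W × W => p.1 ≠ u ∧ p.2 ≠ u) (s := Finset.univ.filter (fun p => T p.1 p.2))]
  congr 1
  · -- part 1
    refine Finset.card_bij'
      (fun (p : W × W) (hp : p ∈ (Finset.univ.filter (fun p => T p.1 p.2)).filter
        (fun p : W × W => p.1 ≠ u ∧ p.2 ≠ u)) =>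
        ((⟨p.1, (Finset.mem_filter.mp hp).2.1⟩, ⟨p.2, (Finset.mem_filter.mp hp).2.2⟩) :
          {z : W // z ≠ u} × {z : W // z ≠ u}))
      (fun q _ => (q.1.1, q.2.1)) ?_ ?_ ?_ ?_
    · intro p hp
      simp only [Finset.mem_filter, Finset.mem_univ, true_and] at hp ⊢
      exact hp.1
    · intro q hq
      simp only [Finset.mem_filter, Finset.mem_univ, true_and] at hq ⊢
      exact ⟨hq, q.1.2, q.2.2⟩
    · intro p hp; rfl
    · intro q hq; rfl
  · -- part 2 : exactly one arc at u
    rw [Finset.card_eq_one]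
    refine ⟨if h : T vv u = true then (vv, u) else (u, vv), ?_⟩
    ext p
    simp only [Finset.mem_filter, Finset.mem_univ, true_and, Finset.mem_singleton,
      not_and_or, not_not]
    constructor
    · rintro ⟨hp, hu⟩
      have hne : p.1 ≠ p.2 := by
        intro h; rw [h] at hp; exact anti_irrefl hT _ hp
      rcases hu with h1 | h2
      · -- p.1 = u
        rw [h1] at hp hne
        have h2 : p.2 = vv := hleaf _ (underG_adj.mpr ⟨hne, Or.inl hp⟩)
        have hT2 : T u vv = true := by rwa [h2] at hp
        have hnb : ¬ T vv u = true := fun h => anti_not_both hT h hT2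
        rw [dif_neg hnb]
        exact Prod.ext_iff.mpr ⟨h1, h2⟩
      · -- p.2 = u
        rw [h2] at hp hne
        have h1 : p.1 = vv := hleaf _ (underG_adj.mpr ⟨Ne.symm hne, Or.inr hp⟩)
        have hTv : T vv u = true := by rwa [h1] at hp
        rw [dif_pos hTv]
        exact Prod.ext_iff.mpr ⟨h1, h2⟩
    · intro hp
      split_ifs at hp with h
      · subst hp; exact ⟨h, Or.inr rfl⟩
      · subst hp
        rcases hdir with h1 | h1
        · exact absurd h1 h
        · exact ⟨h1, Or.inl rfl⟩

open SimpleGraph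

lemma extension {n : ℕ} {A : Fin n → Fin n → Bool} (hA : Loopless A)
    {W : Type*} [DecidableEq W] {T : W → W → Bool} (hT : Antidirected T)
    {u v : W} (hvu : v ≠ u) (huv : T v u = true ∨ T u v = true)
    (hleafT : ∀ x : W, (T u x = true ∨ T x u = true) → x = v)
    (plen plen₂ : ℕ) (u₂ v₂ : {x : W // x ≠ u})
    (hcase : (u₂ = (⟨v, hvu⟩ : {x : W // x ≠ u}) ∧ (plen₂ % 2 = 0 ↔ plen % 2 = 1))
           ∨ (v₂ = (⟨v, hvu⟩ : {x : W // x ≠ u}) ∧ (plen₂ % 2 = plen % 2)))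
    {p : Fin n × Fin n}
    (hpA : A p.1 p.2 = true) (hpG : GoodArc A (delV T u) u₂ v₂ plen₂ p)
    {z : Fin n}
    (hz : (if T v u = true then A (bOf (T v u) p) z else A z (bOf (T v u) p)) = true)
    (hzr : inR (decide (plen % 2 = 1)) (bOf (T v u) p) (cOf (T v u) p) z) :
    A (mkArc (T v u) p z).1 (mkArc (T v u) p z).2 = true ∧
      GoodArc A T u v plen (mkArc (T v u) p z) := by
  obtain ⟨f, hfinj, hfarc, hfpq, hfree⟩ := hpG
  set vv : {x : W // x ≠ u} := ⟨v, hvu⟩ with hvv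
  have hp12 : p.1 ≠ p.2 := by
    intro h; rw [h] at hpA; exact hA _ hpA
  -- name b and c
  obtain ⟨b, hbdef⟩ : ∃ b, bOf (T v u) p = b := ⟨_, rfl⟩
  obtain ⟨c, hcdef⟩ : ∃ c, cOf (T v u) p = c := ⟨_, rfl⟩
  rw [hbdef] at hz
  rw [hbdef, hcdef] at hzr
  have hbc : b ≠ c := by
    rw [← hbdef, ← hcdef]; cases hB : T v u <;> simp [bOf, cOf] <;>
      [exact fun h => hp12 h.symm; exact hp12]
  -- orientation and image identification
  have hmain : f vv = b ∧
      (((f u₂ = b ∧ f v₂ = c) ∧ (plen₂ % 2 = 0 ↔ plen % 2 = 1)) ∨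
       ((f u₂ = c ∧ f v₂ = b) ∧ (plen₂ % 2 = plen % 2))) := by
    rcases hfpq with ⟨hdT, hpq⟩ | ⟨hdT, hpq⟩ <;> rcases hcase with ⟨hc2, hpar⟩ | ⟨hc2, hpar⟩
    · -- T'' v₂ u₂, case A (u₂ = vv)
      have hTvv : T v₂.1 v = true := by
        have : u₂.1 = v := by rw [hc2]
        rwa [delV, this] at hdT
      have hTvuF : T v u = false := by
        cases h : T v u
        · rfl
        · exact absurd (hT _ _ _ hTvv h) (fun h => h)
      rw [hTvuF] at hbdef hcdef
      simp only [bOf, cOf, Bool.false_eq_true, if_false] at hbdef hcdef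
      have h1 : f u₂ = p.2 := by rw [← hpq]
      have h2 : f v₂ = p.1 := by rw [← hpq]
      exact ⟨by rw [← hc2, h1, hbdef], Or.inl ⟨⟨by rw [h1, hbdef], by rw [h2, hcdef]⟩, hpar⟩⟩
    · -- T'' v₂ u₂, case B (v₂ = vv)
      have hTvu2 : T v u₂.1 = true := by
        have : v₂.1 = v := by rw [hc2]
        rwa [delV, this] at hdT
      have hTuvF : T u v = false := by
        cases h : T u v
        · rfl
        · exact absurd (hT _ _ _ h hTvu2) (fun h => h)
      have hTvuT : T v u = true := by
        rcases huv with h | h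
        · exact h
        · rw [hTuvF] at h; exact absurd h (by simp)
      rw [hTvuT] at hbdef hcdef
      simp only [bOf, cOf, if_true] at hbdef hcdef
      have h1 : f v₂ = p.1 := by rw [← hpq]
      have h2 : f u₂ = p.2 := by rw [← hpq]
      exact ⟨by rw [← hc2, h1, hbdef], Or.inr ⟨⟨by rw [h2, hcdef], by rw [h1, hbdef]⟩, hpar⟩⟩
    · -- T'' u₂ v₂, case A (u₂ = vv)
      have hTvv2 : T v v₂.1 = true := by
        have : u₂.1 = v := by rw [hc2]
        rwa [delV, this] at hdT
      have hTuvF : T u v = false := by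
        cases h : T u v
        · rfl
        · exact absurd (hT _ _ _ h hTvv2) (fun h => h)
      have hTvuT : T v u = true := by
        rcases huv with h | h
        · exact h
        · rw [hTuvF] at h; exact absurd h (by simp)
      rw [hTvuT] at hbdef hcdef
      simp only [bOf, cOf, if_true] at hbdef hcdef
      have h1 : f u₂ = p.1 := by rw [← hpq]
      have h2 : f v₂ = p.2 := by rw [← hpq]
      exact ⟨by rw [← hc2, h1, hbdef], Or.inl ⟨⟨by rw [h1, hbdef], by rw [h2, hcdef]⟩, hpar⟩⟩
    · -- T'' u₂ v₂, case B (v₂ = vv)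
      have hTv2 : T u₂.1 v = true := by
        have : v₂.1 = v := by rw [hc2]
        rwa [delV, this] at hdT
      have hTvuF : T v u = false := by
        cases h : T v u
        · rfl
        · exact absurd (hT _ _ _ hTv2 h) (fun h => h)
      rw [hTvuF] at hbdef hcdef
      simp only [bOf, cOf, Bool.false_eq_true, if_false] at hbdef hcdef
      have h1 : f u₂ = p.1 := by rw [← hpq]
      have h2 : f v₂ = p.2 := by rw [← hpq]
      exact ⟨by rw [← hc2, h2, hbdef], Or.inr ⟨⟨by rw [h1, hcdef], by rw [h2, hbdef]⟩, hpar⟩⟩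
  obtain ⟨hfv, hsplit⟩ := hmain
  -- uniform free-region fact for the old embedding
  have HFREE : ∀ ζ : Fin n,
      (plen % 2 = 1 → 0 < dlt b ζ → dlt b ζ < dlt b c → ζ ∉ Set.range f) ∧
      (plen % 2 = 0 → dlt b c < dlt b ζ → ζ ∉ Set.range f) := by
    intro ζ
    have hbc0 : 0 < dlt b c := by
      rcases Nat.eq_zero_or_pos (dlt b c) with h | h
      · exact absurd (dlt_eq_zero_iff.mp h) hbc
      · exact h
    rcases hsplit with ⟨⟨hx2, hy2⟩, hpar⟩ | ⟨⟨hx2, hy2⟩, hpar⟩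
    · -- (f u₂, f v₂) = (b, c), plen₂ ≡ plen + 1
      constructor
      · intro hp1 hd0 hdc
        have hp20 : plen₂ % 2 = 0 := hpar.mpr hp1
        refine (hfree ζ).1 hp20 ?_
        rw [hx2, hy2, cycBetween_iff hbc]
        exact ⟨hd0, hdc⟩
      · intro hp0 hdc
        have hp21 : plen₂ % 2 = 1 := by
          rcases Nat.mod_two_eq_zero_or_one plen₂ with h | h
          · rw [hpar.mp h] at hp0; exact absurd hp0 (by simp)
          · exact h
        refine (hfree ζ).2 hp21 ?_ ?_ ?_
        · rw [hx2]; intro h; rw [h] at hdc; simp [dlt_eq_zero_iff.mpr rfl] at hdc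
        · rw [hy2]; intro h; rw [h] at hdc; omega
        · rw [hx2, hy2, cycBetween_iff hbc]; omega
    · -- (f u₂, f v₂) = (c, b), plen₂ ≡ plen
      constructor
      · intro hp1 hd0 hdc
        have hp21 : plen₂ % 2 = 1 := by rw [hpar]; exact hp1
        refine (hfree ζ).2 hp21 ?_ ?_ ?_
        · rw [hx2]; intro h; rw [h] at hdc; omega
        · rw [hy2]; intro h; rw [h] at hd0; simp [dlt_eq_zero_iff.mpr rfl] at hd0
        · rw [hx2, hy2, cycBetween_swap (Ne.symm hbc)]; omega
      · intro hp0 hdc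
        have hp20 : plen₂ % 2 = 0 := by rw [hpar]; exact hp0
        refine (hfree ζ).1 hp20 ?_
        rw [hx2, hy2, cycBetween_swap (Ne.symm hbc)]
        exact hdc
  -- region facts for z
  have hzreg : (plen % 2 = 1 → 0 < dlt b z ∧ dlt b z < dlt b c) ∧
      (plen % 2 = 0 → dlt b c < dlt b z) := by
    constructor
    · intro h1; rw [h1] at hzr; simpa [inR] using hzr
    · intro h0
      have : decide (plen % 2 = 1) = false := by simp [h0]
      rw [this] at hzr; simpa [inR] using hzr
  have hzb : z ≠ b := by
    intro h
    rcases Nat.mod_two_eq_zero_or_one plen with h0 | h1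
    · have h2 := hzreg.2 h0; rw [h] at h2; simp [dlt_eq_zero_iff.mpr rfl] at h2
    · have h2 := (hzreg.1 h1).1; rw [h] at h2; simp [dlt_eq_zero_iff.mpr rfl] at h2
  have hznotf : z ∉ Set.range f := by
    rcases Nat.mod_two_eq_zero_or_one plen with h0 | h1
    · exact (HFREE z).2 h0 (hzreg.2 h0)
    · exact (HFREE z).1 h1 ((hzreg.1 h1).1) ((hzreg.1 h1).2)
  -- define the new embedding
  set F : W → Fin n := fun x => if hx : x = u then z else f ⟨x, hx⟩ with hF
  have hFu : F u = z := by simp [hF]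
  have hFne : ∀ (x : W) (hx : x ≠ u), F x = f ⟨x, hx⟩ := by
    intro x hx; simp [hF, hx]
  have hFv : F v = b := by rw [hFne v hvu]; exact hfv
  have hrangeF : ∀ ζ : Fin n, ζ ∈ Set.range F → ζ = z ∨ ζ ∈ Set.range f := by
    rintro ζ ⟨t, ht⟩
    by_cases htu : t = u
    · left; rw [← ht, htu, hFu]
    · right; rw [← ht, hFne t htu]; exact ⟨_, rfl⟩
  have hFinj : Function.Injective F := by
    intro x y hxy
    by_cases hx : x = u <;> by_cases hy : y = u
    · rw [hx, hy]
    · rw [hx, hFu, hFne y hy] at hxy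
      exact absurd ⟨_, hxy.symm⟩ hznotf
    · rw [hy, hFu, hFne x hx] at hxy
      exact absurd ⟨_, hxy⟩ hznotf
    · rw [hFne x hx, hFne y hy] at hxy
      have := hfinj hxy
      exact congrArg Subtype.val this
  have hTvuTF : T v u = true ∨ (T v u = false ∧ T u v = true) := by
    cases h : T v u
    · rcases huv with h1 | h1
      · rw [h] at h1; exact absurd h1 (by simp)
      · exact Or.inr ⟨rfl, h1⟩
    · exact Or.inl rfl
  have hFarc : ∀ x y : W, T x y = true → A (F x) (F y) = true := by
    intro x y hxy
    by_cases hx : x = u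
    · have hyv : y = v := hleafT y (Or.inl (hx ▸ hxy))
      have hTuv : T u v = true := by rw [← hx, ← hyv]; exact hxy
      have hTvuF : T v u = false := by
        cases h : T v u
        · rfl
        · exact absurd (anti_not_both hT h hTuv) (fun h => h)
      rw [hx, hyv, hFu, hFv]
      rw [hTvuF] at hz
      simpa using hz
    · by_cases hy : y = u
      · have hxv : x = v := hleafT x (Or.inr (hy ▸ hxy))
        have hTvuT : T v u = true := by rw [← hxv, ← hy]; exact hxy
        rw [hxv, hy, hFu, hFv]
        rw [hTvuT] at hz
        simpa using hz
      · rw [hFne x hx, hFne y hy]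
        exact hfarc ⟨x, hx⟩ ⟨y, hy⟩ hxy
  -- new free-region condition
  have hFfree : ∀ ζ : Fin n,
      (plen % 2 = 0 → cycBetween (F u) (F v) ζ → ζ ∉ Set.range F) ∧
      (plen % 2 = 1 → ζ ≠ F u → ζ ≠ F v → ¬cycBetween (F u) (F v) ζ → ζ ∉ Set.range F) := by
    intro ζ
    rw [hFu, hFv]
    constructor
    · intro h0 hcy hmem
      rw [cycBetween_swap hzb] at hcy
      rcases hrangeF ζ hmem with h | h
      · rw [h] at hcy; omega
      · exact (HFREE ζ).2 h0 (lt_trans (hzreg.2 h0) hcy) h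
    · intro h1 hz1 hb1 hncy hmem
      have h2 := hzreg.1 h1
      rw [cycBetween_swap hzb] at hncy
      have hζb : 0 < dlt b ζ := by
        rcases Nat.eq_zero_or_pos (dlt b ζ) with h | h
        · exact absurd (dlt_eq_zero_iff.mp h).symm hb1
        · exact h
      have hne : dlt b ζ ≠ dlt b z := fun h => hz1 (dlt_inj h)
      have hlt : dlt b ζ < dlt b z := by omega
      rcases hrangeF ζ hmem with h | h
      · exact hz1 h
      · exact (HFREE ζ).1 h1 hζb (by omega) h
  -- conclusion
  rcases hTvuTF with hTT | ⟨hTF, hTuv⟩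
  · have hb1 : p.1 = b := by rw [← hbdef, hTT]; simp [bOf]
    rw [hTT] at hz
    simp only [if_true] at hz
    constructor
    · simp only [mkArc, hTT, if_true]
      rw [hb1]; exact hz
    · refine ⟨F, hFinj, hFarc, Or.inl ⟨hTT, ?_⟩, hFfree⟩
      rw [hFv, hFu]
      simp only [mkArc, hTT, if_true]
      rw [hb1]
  · have hb2 : p.2 = b := by rw [← hbdef, hTF]; simp [bOf]
    rw [hTF] at hz
    simp only [Bool.false_eq_true, if_false] at hz
    constructor
    · simp only [mkArc, hTF, Bool.false_eq_true, if_false]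
      rw [hb2]; exact hz
    · refine ⟨F, hFinj, hFarc, Or.inr ⟨hTuv, ?_⟩, hFfree⟩
      rw [hFv, hFu]
      simp only [mkArc, hTF, Bool.false_eq_true, if_false]
      rw [hb2]

open SimpleGraph

lemma isPath_concat {W : Type*} {G : SimpleGraph W} {a b c : W} {p : G.Walk a b}
    (hp : p.IsPath) (h : G.Adj b c) (hc : c ∉ p.support) : (p.concat h).IsPath := by
  rw [← Walk.isPath_reverse_iff, Walk.reverse_concat, Walk.cons_isPath_iff]
  exact ⟨hp.reverse, by rwa [Walk.support_reverse, List.mem_reverse]⟩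

lemma aux : ∀ (k : ℕ), 0 < k → ∀ {W : Type u_1} [Fintype W] [DecidableEq W] (T : W → W → Bool),
    Antidirected T → (underG T).IsTree → arcCount T = k →
    ∀ (w v u : W) (Q : (underG T).Walk w v) (hadj : (underG T).Adj v u),
    (Q.concat hadj).IsPath →
    (∀ x : W, x ∈ (Q.concat hadj).support ∨ ∃ y ∈ (Q.concat hadj).support,
      y ≠ w ∧ y ≠ u ∧ (underG T).Adj x y) →
    ∀ {n : ℕ}, 0 < n → ∀ (A : Fin n → Fin n → Bool), Loopless A →
    arcCount A - (k - 1) * n ≤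
      {pq : Fin n × Fin n | A pq.1 pq.2 = true ∧
        GoodArc A T u v (Q.concat hadj).length pq}.ncard := by
  intro k
  induction k using Nat.strong_induction_on with
  | _ k IH =>
  intro hk W _ _ T hT htree hkT w v u Q hadj hP hcat n hn A hloopA
  have hvu : v ≠ u := hadj.ne
  have hdirvu : T v u = true ∨ T u v = true := (underG_adj.mp hadj).2
  have hleafAdj : ∀ x, (underG T).Adj u x → x = v := fun x hx => leaf_unique htree hP hcat hx
  have hleafT : ∀ x : W, (T u x = true ∨ T x u = true) → x = v := by
    intro x hx
    have hux : u ≠ x := by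
      rintro rfl
      rcases hx with h | h <;> exact anti_irrefl hT _ h
    exact hleafAdj x (underG_adj.mpr ⟨hux, hx⟩)
  by_cases hk1 : k = 1
  · -- BASE CASE
    subst hk1
    cases Q with
    | cons h' q' =>
      rename_i c
      exfalso
      rw [Walk.concat_cons] at hP
      rw [Walk.cons_isPath_iff] at hP
      have hw1 : w ∉ (q'.concat hadj).support := hP.2
      have hv1 : v ∈ (q'.concat hadj).support := by
        rw [Walk.support_concat]
        exact List.mem_append_left _ q'.end_mem_support
      have hu1 : u ∈ (q'.concat hadj).support := by
        rw [Walk.support_concat]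
        exact List.mem_append_right _ (by simp)
      have hwv : w ≠ v := fun h => hw1 (h ▸ hv1)
      have hwu : w ≠ u := fun h => hw1 (h ▸ hu1)
      have hwc := (underG_adj.mp h').2
      -- two distinct arcs
      have h2 : 1 < arcCount T := by
        unfold arcCount
        rw [Finset.one_lt_card]
        rcases hdirvu with ha | ha <;> rcases hwc with hb | hb
        · exact ⟨(v,u), by simp [ha], (w,c), by simp [hb],
            by simp only [ne_eq, Prod.mk.injEq, not_and]; intro h; exact absurd h.symm hwv⟩
        · exact ⟨(v,u), by simp [ha], (c,w), by simp [hb],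
            by simp only [ne_eq, Prod.mk.injEq, not_and]; intro _ h; exact absurd h.symm hwu⟩
        · exact ⟨(u,v), by simp [ha], (w,c), by simp [hb],
            by simp only [ne_eq, Prod.mk.injEq, not_and]; intro h; exact absurd h.symm hwu⟩
        · exact ⟨(u,v), by simp [ha], (c,w), by simp [hb],
            by simp only [ne_eq, Prod.mk.injEq, not_and]; intro _ h; exact absurd h.symm hwv⟩
      omega
    | nil =>
      have hlen : ((Walk.nil : (underG T).Walk w w).concat hadj).length = 1 := by
        rw [Walk.length_concat]; rfl
      have hall : ∀ x : W, x = w ∨ x = u := by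
        intro x
        rcases hcat x with hx | ⟨y, hy, hyw, hyu, _⟩
        · rw [Walk.concat_nil, Walk.support_cons, Walk.support_nil] at hx
          simpa using hx
        · rw [Walk.concat_nil, Walk.support_cons, Walk.support_nil] at hy
          simp at hy
          rcases hy with h | h
          · exact absurd h hyw
          · exact absurd h hyu
      have hseteq : {pq : Fin n × Fin n | A pq.1 pq.2 = true ∧
          GoodArc A T u w ((Walk.nil : (underG T).Walk w w).concat hadj).length pq}
          = {pq : Fin n × Fin n | A pq.1 pq.2 = true} := by
        ext pq
        simp only [Set.mem_setOf_eq, and_iff_left_iff_imp]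
        intro hApq
        have hpq12 : pq.1 ≠ pq.2 := by
          intro h; rw [h] at hApq; exact hloopA _ hApq
        rw [hlen]
        rcases hdirvu with hd | hd
        · -- T w u
          refine ⟨fun x => if x = u then pq.2 else pq.1, ?_, ?_, ?_, ?_⟩
          · intro x y hxy
            rcases hall x with hx | hx <;> rcases hall y with hy | hy <;> rw [hx, hy] <;>
              rw [hx, hy] at hxy <;> simp [hvu] at hxy ⊢
            · exact absurd hxy hpq12
            · exact absurd hxy.symm hpq12
          · intro x y hxy
            rcases hall x with hx | hx <;> rcases hall y with hy | hy <;>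
              rw [hx, hy] at hxy ⊢
            · exact absurd hxy (anti_irrefl hT w)
            · simp [hvu]; exact hApq
            · exact absurd (anti_not_both hT hd hxy) id
            · exact absurd hxy (anti_irrefl hT u)
          · left
            refine ⟨hd, ?_⟩
            simp [hvu]
          · intro ζ
            constructor
            · intro h; simp at h
            · intro _ h1 h2 _ hmem
              simp only [hvu, ite_true, ite_false, if_pos, if_neg] at h1 h2
              rcases hmem with ⟨t, ht⟩
              rcases hall t with h | h <;> rw [h] at ht <;> simp [hvu] at ht
              · exact h2 ht.symm
              · exact h1 ht.symm
        · -- T u w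
          refine ⟨fun x => if x = u then pq.1 else pq.2, ?_, ?_, ?_, ?_⟩
          · intro x y hxy
            rcases hall x with hx | hx <;> rcases hall y with hy | hy <;> rw [hx, hy] <;>
              rw [hx, hy] at hxy <;> simp [hvu] at hxy ⊢
            · exact absurd hxy.symm hpq12
            · exact absurd hxy hpq12
          · intro x y hxy
            rcases hall x with hx | hx <;> rcases hall y with hy | hy <;>
              rw [hx, hy] at hxy ⊢
            · exact absurd hxy (anti_irrefl hT w)
            · exact absurd (anti_not_both hT hd hxy) id
            · simp [hvu]; exact hApq
            · exact absurd hxy (anti_irrefl hT u)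
          · right
            refine ⟨hd, ?_⟩
            simp [hvu]
          · intro ζ
            constructor
            · intro h; simp at h
            · intro _ h1 h2 _ hmem
              simp only [hvu, ite_true, ite_false, if_pos, if_neg] at h1 h2
              rcases hmem with ⟨t, ht⟩
              rcases hall t with h | h <;> rw [h] at ht <;> simp [hvu] at ht
              · exact h2 ht.symm
              · exact h1 ht.symm
      rw [hseteq]
      have hsf : {pq : Fin n × Fin n | A pq.1 pq.2 = true}
          = ↑(Finset.univ.filter fun pq : Fin n × Fin n => A pq.1 pq.2 = true) := by
        ext pq; simp
      rw [hsf, Set.ncard_coe_finset]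
      simp [arcCount]
  · -- INDUCTIVE STEP
    have hk2 : 2 ≤ k := by omega
    have hQu : u ∉ Q.support := u_not_in_Q hP
    have hQpath : Q.IsPath := q_isPath hP
    have hwu : w ≠ u := fun h => hQu (h ▸ Q.start_mem_support)
    have hT'' : Antidirected (delV T u) := fun x y z hx hy => hT _ _ _ hx hy
    have htree'' : (underG (delV T u)).IsTree := delV_isTree htree hadj hleafAdj
    have hcnt : arcCount (delV T u) = k - 1 := by
      have := arcCount_delV hT hdirvu hleafAdj
      omega
    have hplen : (Q.concat hadj).length = Q.length + 1 := Walk.length_concat _ _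
    by_cases hB : ∃ ℓ : W, (underG T).Adj ℓ v ∧ ℓ ∉ (Q.concat hadj).support
    · -- CASE B : v has an off-spine leaf
      obtain ⟨ℓ, hℓv, hℓP⟩ := hB
      have huP : u ∈ (Q.concat hadj).support := Walk.end_mem_support _
      have hℓu : ℓ ≠ u := fun h => hℓP (h ▸ huP)
      have hQsub : ∀ x ∈ Q.support, x ≠ u := fun x hx h => hQu (h ▸ hx)
      have hℓQ : ℓ ∉ Q.support := fun h => hℓP (by
        rw [Walk.support_concat]
        exact List.mem_append_left _ h)
      have hadj'' : (underG (delV T u)).Adj ⟨v, hvu⟩ ⟨ℓ, hℓu⟩ := delV_adj.mpr hℓv.symm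
      have hP'' : ((liftWalk Q hQsub hwu hvu).concat hadj'').IsPath := by
        refine isPath_concat (liftWalk_isPath hQpath _ _ _) _ ?_
        rw [liftWalk_support]
        exact hℓQ
      have hcat'' : ∀ x : {z : W // z ≠ u},
          x ∈ ((liftWalk Q hQsub hwu hvu).concat hadj'').support ∨
          ∃ y ∈ ((liftWalk Q hQsub hwu hvu).concat hadj'').support,
            y ≠ ⟨w, hwu⟩ ∧ y ≠ ⟨ℓ, hℓu⟩ ∧ (underG (delV T u)).Adj x y := by
        intro x
        rcases hcat x.1 with hx | ⟨y, hy, hyw, hyu, hxy⟩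
        · left
          rw [Walk.support_concat] at hx
          rw [Walk.support_concat]
          rcases List.mem_append.mp hx with h | h
          · exact List.mem_append_left _ ((liftWalk_support _ _ _ _).mpr h)
          · simp at h
            exact absurd h x.2
        · right
          have hyQ : y ∈ Q.support := by
            rw [Walk.support_concat] at hy
            rcases List.mem_append.mp hy with h | h
            · exact h
            · simp at h; exact absurd h hyu
          refine ⟨⟨y, hyu⟩, ?_, ?_, ?_, delV_adj.mpr hxy⟩
          · rw [Walk.support_concat]
            exact List.mem_append_left _ ((liftWalk_support _ _ _ _).mpr hyQ)
          · intro h; exact hyw (congrArg Subtype.val h)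
          · intro h
            have h2 : y = ℓ := congrArg Subtype.val h
            rw [h2] at hyQ; exact hℓQ hyQ
      have hlen'' : ((liftWalk Q hQsub hwu hvu).concat hadj'').length = Q.length + 1 := by
        rw [Walk.length_concat, liftWalk_length]
      have IH' := IH (k-1) (by omega) (by omega) (delV T u) hT'' htree'' hcnt
        ⟨w, hwu⟩ ⟨v, hvu⟩ ⟨ℓ, hℓu⟩ (liftWalk Q hQsub hwu hvu) hadj'' hP'' hcat'' hn A hloopA
      have hcount := countLemma A hloopA
        {pq : Fin n × Fin n | A pq.1 pq.2 = true ∧ GoodArc A (delV T u) ⟨ℓ, hℓu⟩ ⟨v, hvu⟩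
          ((liftWalk Q hQsub hwu hvu).concat hadj'').length pq}
        {pq : Fin n × Fin n | A pq.1 pq.2 = true ∧ GoodArc A T u v (Q.concat hadj).length pq}
        (T v u) (decide ((Q.concat hadj).length % 2 = 1))
        (fun p hp => hp.1)
        (fun p hp z hz hzr =>
          extension hloopA hT hvu hdirvu hleafT (Q.concat hadj).length
            ((liftWalk Q hQsub hwu hvu).concat hadj'').length
            ⟨ℓ, hℓu⟩ ⟨v, hvu⟩ (Or.inr ⟨rfl, by rw [hlen'', hplen]⟩) hp.1 hp.2 hz hzr)
      have harith : (k - 1) * n = (k - 1 - 1) * n + n := by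
        have h1 : k - 1 = (k - 1 - 1) + 1 := by omega
        conv_lhs => rw [h1]
        rw [Nat.succ_mul]
      omega
    · -- CASE A : no off-spine neighbour of v
      push_neg at hB
      have hwv : w ≠ v := by
        intro hwveq
        subst hwveq
        have hQnil : Q = Walk.nil := path_loop_nil hQpath
        subst hQnil
        have hall : ∀ x : W, x = w ∨ x = u := by
          intro x
          rcases hcat x with hx | ⟨y, hy, hyw, hyu, _⟩
          · rw [Walk.concat_nil, Walk.support_cons, Walk.support_nil] at hx
            simpa using hx
          · rw [Walk.concat_nil, Walk.support_cons, Walk.support_nil] at hy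
            simp at hy
            rcases hy with h | h
            · exact absurd h hyw
            · exact absurd h hyu
        have hle : arcCount T ≤ 1 := by
          unfold arcCount
          rw [Finset.card_le_one]
          intro p hp q hq
          simp only [Finset.mem_filter, Finset.mem_univ, true_and] at hp hq
          have hclass : ∀ r : W × W, T r.1 r.2 = true → (r = (w, u) ∨ r = (u, w)) := by
            intro r hr
            have h12 : r.1 ≠ r.2 := fun h => anti_irrefl hT _ (h ▸ hr)
            rcases hall r.1 with h1 | h1 <;> rcases hall r.2 with h2 | h2
            · exact absurd (h1.trans h2.symm) h12
            · left; exact Prod.ext_iff.mpr ⟨h1, h2⟩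
            · right; exact Prod.ext_iff.mpr ⟨h1, h2⟩
            · exact absurd (h1.trans h2.symm) h12
          rcases hclass p hp with h1 | h1 <;> rcases hclass q hq with h2 | h2 <;>
            rw [h1, h2]
          · exfalso
            rw [h1] at hp; rw [h2] at hq
            exact anti_not_both hT hp hq
          · exfalso
            rw [h1] at hp; rw [h2] at hq
            exact anti_not_both hT hp hq
        omega
      obtain ⟨s, Q₀, hsv, hQeq⟩ := exists_concat Q hwv
      subst hQeq
      have hsu : s ≠ u := by
        intro h
        apply hQu
        rw [Walk.support_concat]
        exact List.mem_append_left _ (h ▸ Q₀.end_mem_support)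
      have hQ₀sub : ∀ x ∈ Q₀.support, x ≠ u := fun x hx h => hQu (by
        rw [Walk.support_concat]
        exact List.mem_append_left _ (h ▸ hx))
      have hadj'' : (underG (delV T u)).Adj ⟨s, hsu⟩ ⟨v, hvu⟩ := delV_adj.mpr hsv
      have hQ₀path : Q₀.IsPath := q_isPath hQpath
      have hvQ₀ : v ∉ Q₀.support := u_not_in_Q hQpath
      have hP'' : ((liftWalk Q₀ hQ₀sub hwu hsu).concat hadj'').IsPath := by
        refine isPath_concat (liftWalk_isPath hQ₀path _ _ _) _ ?_
        rw [liftWalk_support]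
        exact hvQ₀
      have hcat'' : ∀ x : {z : W // z ≠ u},
          x ∈ ((liftWalk Q₀ hQ₀sub hwu hsu).concat hadj'').support ∨
          ∃ y ∈ ((liftWalk Q₀ hQ₀sub hwu hsu).concat hadj'').support,
            y ≠ ⟨w, hwu⟩ ∧ y ≠ ⟨v, hvu⟩ ∧ (underG (delV T u)).Adj x y := by
        intro x
        by_cases hxP : x.1 ∈ ((Q₀.concat hsv).concat hadj).support
        · left
          have hxQ : x.1 ∈ (Q₀.concat hsv).support := by
            rw [Walk.support_concat] at hxP
            rcases List.mem_append.mp hxP with h | h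
            · exact h
            · simp at h; exact absurd h x.2
          rw [Walk.support_concat] at hxQ
          rw [Walk.support_concat]
          rcases List.mem_append.mp hxQ with h | h
          · exact List.mem_append_left _ ((liftWalk_support _ _ _ _).mpr h)
          · simp at h
            apply List.mem_append_right
            have hx2 : x = ⟨v, hvu⟩ := Subtype.ext (by rw [h])
            simp [hx2]
        · rcases hcat x.1 with hx | ⟨y, hy, hyw, hyu, hxy⟩
          · exact absurd hx hxP
          · right
            have hyv : y ≠ v := by
              intro h; rw [h] at hxy
              exact hxP (hB x.1 hxy)
            have hyQ₀ : y ∈ Q₀.support := by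
              have hyQ : y ∈ (Q₀.concat hsv).support := by
                rw [Walk.support_concat] at hy
                rcases List.mem_append.mp hy with h | h
                · exact h
                · simp at h; exact absurd h hyu
              rw [Walk.support_concat] at hyQ
              rcases List.mem_append.mp hyQ with h | h
              · exact h
              · simp at h; exact absurd h hyv
            refine ⟨⟨y, hyu⟩, ?_, ?_, ?_, delV_adj.mpr hxy⟩
            · rw [Walk.support_concat]
              exact List.mem_append_left _ ((liftWalk_support _ _ _ _).mpr hyQ₀)
            · intro h; exact hyw (congrArg Subtype.val h)
            · intro h; exact hyv (congrArg Subtype.val h)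
      have hlen'' : ((liftWalk Q₀ hQ₀sub hwu hsu).concat hadj'').length = Q₀.length + 1 := by
        rw [Walk.length_concat, liftWalk_length]
      have hplenA : ((Q₀.concat hsv).concat hadj).length = Q₀.length + 2 := by
        rw [Walk.length_concat, Walk.length_concat]
      have IH' := IH (k-1) (by omega) (by omega) (delV T u) hT'' htree'' hcnt
        ⟨w, hwu⟩ ⟨s, hsu⟩ ⟨v, hvu⟩ (liftWalk Q₀ hQ₀sub hwu hsu) hadj'' hP'' hcat'' hn A hloopA
      have hcount := countLemma A hloopA
        {pq : Fin n × Fin n | A pq.1 pq.2 = true ∧ GoodArc A (delV T u) ⟨v, hvu⟩ ⟨s, hsu⟩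
          ((liftWalk Q₀ hQ₀sub hwu hsu).concat hadj'').length pq}
        {pq : Fin n × Fin n | A pq.1 pq.2 = true ∧
          GoodArc A T u v ((Q₀.concat hsv).concat hadj).length pq}
        (T v u) (decide (((Q₀.concat hsv).concat hadj).length % 2 = 1))
        (fun p hp => hp.1)
        (fun p hp z hz hzr =>
          extension hloopA hT hvu hdirvu hleafT ((Q₀.concat hsv).concat hadj).length
            ((liftWalk Q₀ hQ₀sub hwu hsu).concat hadj'').length
            ⟨v, hvu⟩ ⟨s, hsu⟩ (Or.inl ⟨rfl, by rw [hlen'', hplenA]; omega⟩) hp.1 hp.2 hz hzr)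
      have harith : (k - 1) * n = (k - 1 - 1) * n + n := by
        have h1 : k - 1 = (k - 1 - 1) + 1 := by omega
        conv_lhs => rw [h1]
        rw [Nat.succ_mul]
      omega


end CatAux

/-- A convex digraph of order `n` contains at least `a(D) − (k−1)·n` arcs that
are good for a given antidirected caterpillar `T` with `k` arcs (given with its spine:
the path `Q.concat hadj` ending with the final edge between `v` and the final vertex `u`). -/
theorem stmt_6 (k n : ℕ) (hk : 0 < k) (hn : 0 < n)
    {W : Type*} [Fintype W] [DecidableEq W]
    (T : W → W → Bool) (hT : Antidirected T)
    (htree : (underG T).IsTree) (hkT : arcCount T = k)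
    (w v u : W) (Q : (underG T).Walk w v) (hadj : (underG T).Adj v u)
    (hP : (Q.concat hadj).IsPath)
    (hcat : ∀ x : W, x ∈ (Q.concat hadj).support ∨
      ∃ y ∈ (Q.concat hadj).support, y ≠ w ∧ y ≠ u ∧ (underG T).Adj x y)
    (A : Fin n → Fin n → Bool) (hloop : Loopless A) :
    arcCount A - (k - 1) * n ≤
      {pq : Fin n × Fin n | A pq.1 pq.2 ∧
        GoodArc A T u v (Q.concat hadj).length pq}.ncard := by
  exact CatAux.aux k hk T hT htree hkT w v u Q hadj hP hcat hn A hloop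
end

section
/- Let n be a positive integer, let D be a convex digraph of order n, and let T be an antidirected caterpillar. Then D contains at least a(D) − (|T⁺| − 1)·|D⁻| − (|T⁻| − 1)·|D⁺| arcs that are good for T. -/
open Finset

namespace Stmt8

variable {n : ℕ}

/-- clockwise distance from `x` to `z`. -/
def key (x z : Fin n) : ℕ := if x ≤ z then z.val - x.val else z.val + n - x.val

lemma key_lt (x z : Fin n) : key x z < n := by
  have hx := x.isLt; have hz := z.isLt
  unfold key; split_ifs with h
  · omega
  · simp only [Fin.le_def, not_le] at h; omega

lemma key_self (x : Fin n) : key x x = 0 := by simp [key]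

lemma key_eq_zero {x z : Fin n} (h : key x z = 0) : z = x := by
  have hx := x.isLt; have hz := z.isLt
  unfold key at h; split_ifs at h with h'
  · simp only [Fin.le_def] at h'; exact Fin.ext (by omega)
  · omega

lemma key_pos {x z : Fin n} (h : z ≠ x) : 0 < key x z := by
  rcases Nat.eq_zero_or_pos (key x z) with h0 | h0
  · exact absurd (key_eq_zero h0) h
  · exact h0

lemma key_inj {x z1 z2 : Fin n} (h : key x z1 = key x z2) : z1 = z2 := by
  have h1 := z1.isLt; have h2 := z2.isLt; have hx := x.isLt
  unfold key at h
  apply Fin.ext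
  split_ifs at h with ha hb hb <;> simp only [Fin.le_def, not_le] at * <;> omega

lemma cycBetween_iff {x y z : Fin n} (hxy : x ≠ y) (hzx : z ≠ x) :
    cycBetween x y z ↔ key x z < key x y := by
  have h1 := z.isLt; have h2 := y.isLt; have hx := x.isLt
  have hxy' : x.val ≠ y.val := fun h => hxy (Fin.ext h)
  have hzx' : z.val ≠ x.val := fun h => hzx (Fin.ext h)
  unfold cycBetween key
  split_ifs with ha hb hc hb hc <;>
    simp only [Fin.lt_def, Fin.le_def, not_le, not_lt] at * <;> omega

lemma not_cycBetween_left (x y : Fin n) : ¬ cycBetween x y x := by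
  unfold cycBetween; split_ifs with h
  · rintro ⟨h1, -⟩; exact lt_irrefl _ h1
  · rintro (h1 | h1)
    · exact lt_irrefl _ h1
    · exact h h1

lemma not_cycBetween_right (x y : Fin n) : ¬ cycBetween x y y := by
  unfold cycBetween; split_ifs with h
  · rintro ⟨-, h2⟩; exact lt_irrefl _ h2
  · rintro (h1 | h1)
    · exact h h1
    · exact lt_irrefl _ h1

lemma cycBetween_comm {x y z : Fin n} (hxy : x ≠ y) (hzx : z ≠ x) (hzy : z ≠ y) :
    cycBetween y x z ↔ ¬ cycBetween x y z := by
  have hyx : y ≠ x := hxy.symm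
  rw [cycBetween_iff hyx hzy, cycBetween_iff hxy hzx]
  have h1 := z.isLt; have h2 := y.isLt; have hx := x.isLt
  have hxy' : x.val ≠ y.val := fun h => hxy (Fin.ext h)
  have hzx' : z.val ≠ x.val := fun h => hzx (Fin.ext h)
  have hzy' : z.val ≠ y.val := fun h => hzy (Fin.ext h)
  unfold key
  split_ifs with ha hb hc hb hc <;>
    simp only [Fin.le_def, not_le, not_lt] at * <;> omega

section Counting

variable {α : Type*} [DecidableEq α]

lemma top_count (S : Finset α) (κ : α → ℕ)
    (hinj : ∀ a ∈ S, ∀ b ∈ S, κ a = κ b → a = b) (m : ℕ) :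
    (S.filter (fun y => (S.filter (fun s => κ y < κ s)).card < m)).card ≤ m := by
  have : (S.filter (fun y => (S.filter (fun s => κ y < κ s)).card < m)).card
      ≤ (Finset.range m).card := by
    apply Finset.card_le_card_of_injOn (fun y => (S.filter (fun s => κ y < κ s)).card)
    · intro y hy
      simp only [mem_coe, coe_filter, Set.mem_setOf_eq, mem_filter] at hy
      simpa using hy.2
    · intro y1 h1 y2 h2 heq
      simp only [coe_filter, Set.mem_setOf_eq] at h1 h2
      dsimp only at heq
      by_contra hne
      have hkne : κ y1 ≠ κ y2 := fun h => hne (hinj _ h1.1 _ h2.1 h)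
      have key : ∀ a b : α, a ∈ S → b ∈ S → κ a < κ b →
          (S.filter (fun s => κ b < κ s)).card < (S.filter (fun s => κ a < κ s)).card := by
        intro a b ha hb hab
        apply Finset.card_lt_card
        have hsub : S.filter (fun s => κ b < κ s) ⊆ S.filter (fun s => κ a < κ s) := by
          intro s hs; simp only [mem_filter] at hs ⊢; exact ⟨hs.1, hab.trans hs.2⟩
        rw [Finset.ssubset_iff_of_subset hsub]
        refine ⟨b, by simp [hb, hab], by simp⟩
      rcases lt_or_gt_of_ne hkne with h | h
      · have := key _ _ h1.1 h2.1 h; omega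
      · have := key _ _ h2.1 h1.1 h; omega
  simpa using this

lemma count_main (N G' G : Finset α) (κ : α → ℕ) (t : ℕ) (ht : 0 < t)
    (hinj : ∀ a ∈ N, ∀ b ∈ N, κ a = κ b → a = b)
    (hG'N : G' ⊆ N)
    (hext : ∀ z ∈ G', ∀ y ∈ N, κ y < κ z →
      t - 1 ≤ (N.filter (fun s => κ y < κ s ∧ κ s < κ z)).card → y ∈ G) :
    G'.card ≤ G.card + t := by
  rcases G'.eq_empty_or_nonempty with h | h
  · simp [h]
  obtain ⟨z₀, hz₀G', hz₀max⟩ := G'.exists_max_image κ h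
  set Lo := N.filter (fun y => κ y < κ z₀) with hLo
  have hLoN : Lo ⊆ N := filter_subset _ _
  have hG'sub : G' ⊆ insert z₀ Lo := by
    intro a ha
    have hle := hz₀max a ha
    rcases eq_or_lt_of_le hle with heq | hlt
    · have : a = z₀ := hinj _ (hG'N ha) _ (hG'N hz₀G') heq
      simp [this]
    · simp only [mem_insert, hLo, mem_filter]
      exact Or.inr ⟨hG'N ha, hlt⟩
  have h1 : G'.card ≤ Lo.card + 1 :=
    (Finset.card_le_card hG'sub).trans (Finset.card_insert_le _ _)
  have hGoodsub : Lo.filter (fun y => ¬ ((Lo.filter (fun s => κ y < κ s)).card < t - 1)) ⊆ G := by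
    intro y hy
    simp only [hLo, mem_filter, not_lt] at hy
    obtain ⟨⟨hyN, hylt⟩, hcard⟩ := hy
    apply hext z₀ hz₀G' y hyN hylt
    refine hcard.trans (le_of_eq ?_)
    congr 1
    rw [Finset.filter_filter]
    apply Finset.filter_congr
    intro s _; constructor
    · rintro ⟨h1, h2⟩; exact ⟨h2, h1⟩
    · rintro ⟨h1, h2⟩; exact ⟨h2, h1⟩
  have hsplit := Finset.card_filter_add_card_filter_not
    (s := Lo) (p := fun y => (Lo.filter (fun s => κ y < κ s)).card < t - 1)
  have htop := top_count Lo κ (fun a ha b hb => hinj a (hLoN ha) b (hLoN hb)) (t - 1)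
  have hG := Finset.card_le_card hGoodsub
  omega

end Counting


open scoped Classical

/-- polarity (out = `true`) of spine position `i`; final vertex is position `k`,
its neighbour `v` is position `k-1` and has polarity `b`. -/
def polv (k : ℕ) (b : Bool) (i : ℕ) : Bool := if (i + k) % 2 = 1 then b else !b

lemma polv_succ (k : ℕ) (b : Bool) (i : ℕ) : polv k b (i+1) = !polv k b i := by
  unfold polv
  rcases Nat.mod_two_eq_zero_or_one (i + k) with h | h
  · have h1 : (i + k) % 2 ≠ 1 := by omega
    have h2 : (i + 1 + k) % 2 = 1 := by omega
    simp [h1, h2]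
  · have h2 : (i + 1 + k) % 2 ≠ 1 := by omega
    simp [h, h2]

lemma polv_pred (k : ℕ) (b : Bool) (i : ℕ) (hk : 1 ≤ k) :
    polv (k-1) (!b) i = polv k b i := by
  unfold polv
  rcases Nat.mod_two_eq_zero_or_one (i + k) with h1 | h1
  · have h1' : (i + k) % 2 ≠ 1 := by omega
    have h2 : (i + (k-1)) % 2 = 1 := by omega
    simp [h1', h2]
  · have h2 : (i + (k-1)) % 2 ≠ 1 := by omega
    simp [h1, h2]

lemma polv_not (k : ℕ) (b : Bool) (i : ℕ) : polv k (!b) i = !polv k b i := by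
  unfold polv; split_ifs <;> simp

lemma polv_km1 (k : ℕ) (b : Bool) (hk : 1 ≤ k) : polv k b (k-1) = b := by
  unfold polv; have : (k - 1 + k) % 2 = 1 := by omega
  simp [this]

lemma polv_k (k : ℕ) (b : Bool) : polv k b k = !b := by
  unfold polv; have : (k + k) % 2 ≠ 1 := by omega
  simp [this]

/-- image of an abstract embedding: spine images and leaf images. -/
def pimg (g : ℕ → Fin n) (L : ℕ → Finset (Fin n)) (k : ℕ) : Finset (Fin n) :=
  (Finset.range (k+1)).image g ∪ (Finset.range (k+1)).biUnion L

lemma mem_pimg {g : ℕ → Fin n} {L : ℕ → Finset (Fin n)} {k : ℕ} {w : Fin n} :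
    w ∈ pimg g L k ↔ (∃ i ≤ k, g i = w) ∨ (∃ i ≤ k, w ∈ L i) := by
  simp [pimg, Finset.mem_union, Finset.mem_image, Finset.mem_biUnion, Finset.mem_range,
    Nat.lt_succ_iff]

/-- abstract goodness of an arc for the abstract caterpillar `(k, b, ℓ)`. -/
def PGood (A : Fin n → Fin n → Bool) (k : ℕ) (b : Bool) (ℓ : ℕ → ℕ)
    (pq : Fin n × Fin n) : Prop :=
  ∃ g : ℕ → Fin n, ∃ L : ℕ → Finset (Fin n),
    (∀ i j, i ≤ k → j ≤ k → g i = g j → i = j) ∧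
    (∀ i, i ≤ k → (L i).card = ℓ i) ∧
    (∀ i j, i ≤ k → j ≤ k → g i ∉ L j) ∧
    (∀ i j, i ≤ k → j ≤ k → i ≠ j → Disjoint (L i) (L j)) ∧
    (∀ i, i < k → (if polv k b i then A (g i) (g (i+1)) else A (g (i+1)) (g i)) = true) ∧
    (∀ i, i ≤ k → ∀ z ∈ L i, (if polv k b i then A (g i) z else A z (g i)) = true) ∧
    (pq = if b then (g (k-1), g k) else (g k, g (k-1))) ∧
    (∀ z ∈ pimg g L k,
       (k % 2 = 0 → ¬ cycBetween (g k) (g (k-1)) z) ∧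
       (k % 2 = 1 → z = g k ∨ z = g (k-1) ∨ cycBetween (g k) (g (k-1)) z))

def pcount (k : ℕ) (b : Bool) (ℓ : ℕ → ℕ) (bb : Bool) : ℕ :=
  ∑ i ∈ Finset.range (k+1), (if polv k b i = bb then 1 else ℓ i)

def flip (A : Fin n → Fin n → Bool) : Fin n → Fin n → Bool := fun x y => A y x

lemma PGood.flip {A : Fin n → Fin n → Bool} {k : ℕ} {b : Bool} {ℓ : ℕ → ℕ}
    {pq : Fin n × Fin n} (h : PGood A k b ℓ pq) :
    PGood (flip A) k (!b) ℓ pq.swap := by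
  obtain ⟨g, L, h1, h2, h3, h4, h5, h6, h7, h8⟩ := h
  refine ⟨g, L, h1, h2, h3, h4, ?_, ?_, ?_, h8⟩
  · intro i hi
    have h := h5 i hi
    rw [polv_not]
    cases hpol : polv k b i <;>
      simp only [hpol, Bool.not_false, Bool.not_true, if_true, if_false, ite_true,
        ite_false] at h ⊢ <;> exact h
  · intro i hi z hz
    have h := h6 i hi z hz
    rw [polv_not]
    cases hpol : polv k b i <;>
      simp only [hpol, Bool.not_false, Bool.not_true, if_true, if_false, ite_true,
        ite_false] at h ⊢ <;> exact h
  · rw [h7]; cases b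
    · rfl
    · rfl

section Ext

variable {A : Fin n → Fin n → Bool} {k : ℕ} {ℓ : ℕ → ℕ} {x z y : Fin n} {S : Finset (Fin n)}

lemma ext_odd (hk2 : 2 ≤ k) (hodd : k % 2 = 1)
    (hgood : PGood A (k-1) false (fun i => if i = k-1 then 0 else ℓ i) (x, z))
    (hzk : ℓ k = 0)
    (hy : A x y = true) (hS : ∀ s ∈ S, A x s = true) (hScard : S.card = ℓ (k-1))
    (hSbet : ∀ s ∈ S, key x y < key x s ∧ key x s < key x z)
    (hyz : key x y < key x z) (hyx : y ≠ x) :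
    PGood A k true ℓ (x, y) := by
  obtain ⟨g', L', hinj', hcard', hgL', hdisj', hsp', hlf', hpq', hreg'⟩ := hgood
  have hk1 : (1:ℕ) ≤ k - 1 := by omega
  have hpq2 : (x, z) = (g' (k-1), g' (k-1-1)) := by simpa using hpq'
  have hgx : g' (k-1) = x := ((Prod.ext_iff).1 hpq2).1.symm
  have hgz : g' (k-1-1) = z := ((Prod.ext_iff).1 hpq2).2.symm
  have hY0 : 0 < key x y := key_pos hyx
  have hzx : z ≠ x := by
    intro h; rw [h, key_self] at hyz; omega
  have hging : ∀ i, i ≤ k-1 → g' i ∈ pimg g' L' (k-1) :=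
    fun i hi => mem_pimg.2 (Or.inl ⟨i, hi, rfl⟩)
  have hLing : ∀ i, i ≤ k-1 → ∀ w ∈ L' i, w ∈ pimg g' L' (k-1) :=
    fun i hi w hw => mem_pimg.2 (Or.inr ⟨i, hi, hw⟩)
  have hold : ∀ w ∈ pimg g' L' (k-1), w = x ∨ key x z ≤ key x w := by
    intro w hw
    by_cases hwx : w = x
    · exact Or.inl hwx
    · right
      have hnc := (hreg' w hw).1 (by omega)
      rw [hgx, hgz] at hnc
      by_contra hlt
      push_neg at hlt
      exact hnc ((cycBetween_iff (Ne.symm hzx) hwx).2 hlt)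
  have hSkey : ∀ s ∈ S, s ≠ x := by
    intro s hs h
    have := (hSbet s hs).1
    rw [h, key_self] at this; omega
  have hSnotold : ∀ s ∈ S, ∀ w ∈ pimg g' L' (k-1), s ≠ w := by
    intro s hs w hw h
    rcases hold w hw with h1 | h1
    · exact hSkey s hs (h.trans h1)
    · have := (hSbet s hs).2
      rw [h] at this; omega
  have hynotold : ∀ w ∈ pimg g' L' (k-1), y ≠ w := by
    intro w hw h
    rcases hold w hw with h1 | h1
    · exact hyx (h.trans h1)
    · rw [← h] at h1; omega
  set g : ℕ → Fin n := fun i => if i = k then y else g' i with hgdef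
  set L : ℕ → Finset (Fin n) := fun i => if i = k-1 then S else if i = k then ∅ else L' i
    with hLdef
  have hgk : g k = y := by simp [hgdef]
  have hgi : ∀ i, i ≠ k → g i = g' i := by intro i h; simp [hgdef, h]
  have hLk1 : L (k-1) = S := by simp [hLdef]
  have hLk : L k = ∅ := by
    show (if k = k - 1 then S else if k = k then ∅ else L' k) = ∅
    rw [if_neg (show ¬ k = k - 1 by omega), if_pos rfl]
  have hLi : ∀ i, i ≠ k-1 → i ≠ k → L i = L' i := by intro i h1 h2; simp [hLdef, h1, h2]
  refine ⟨g, L, ?_, ?_, ?_, ?_, ?_, ?_, ?_, ?_⟩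
  · -- injectivity
    intro i j hi hj heq
    by_cases hik : i = k <;> by_cases hjk : j = k
    · rw [hik, hjk]
    · exfalso
      rw [hik, hgk, hgi j hjk] at heq
      exact hynotold _ (hging j (by omega)) heq
    · exfalso
      rw [hjk, hgk, hgi i hik] at heq
      exact hynotold _ (hging i (by omega)) heq.symm
    · exact hinj' i j (by omega) (by omega) (by rw [← hgi i hik, ← hgi j hjk, heq])
  · -- cards
    intro i hi
    by_cases h1 : i = k-1
    · rw [h1, hLk1, hScard]
    · by_cases h2 : i = k
      · rw [h2, hLk, hzk]; simp
      · rw [hLi i h1 h2]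
        have := hcard' i (by omega)
        simpa [h1] using this
  · -- spine not in leaves
    intro i j hi hj
    by_cases hj1 : j = k-1
    · rw [hj1, hLk1]
      by_cases hik : i = k
      · rw [hik, hgk]
        intro hmem
        have := (hSbet y hmem).1; omega
      · rw [hgi i hik]
        intro hmem
        exact hSnotold _ hmem _ (hging i (by omega)) rfl
    · by_cases hj2 : j = k
      · rw [hj2, hLk]; simp
      · rw [hLi j hj1 hj2]
        by_cases hik : i = k
        · rw [hik, hgk]
          intro hmem
          exact hynotold _ (hLing j (by omega) y hmem) rfl
        · rw [hgi i hik]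
          exact hgL' i j (by omega) (by omega)
  · -- leaf disjointness
    intro i j hi hj hne
    rw [Finset.disjoint_left]
    intro a hai haj
    by_cases hi1 : i = k-1
    · rw [hi1, hLk1] at hai
      by_cases hj2 : j = k
      · rw [hj2, hLk] at haj; simp at haj
      · have hj1 : j ≠ k-1 := by rw [hi1] at hne; exact fun h => hne h.symm
        rw [hLi j hj1 hj2] at haj
        exact hSnotold a hai a (hLing j (by omega) a haj) rfl
    · by_cases hi2 : i = k
      · rw [hi2, hLk] at hai; simp at hai
      · rw [hLi i hi1 hi2] at hai
        by_cases hj1 : j = k-1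
        · rw [hj1, hLk1] at haj
          exact hSnotold a haj a (hLing i (by omega) a hai) rfl
        · by_cases hj2 : j = k
          · rw [hj2, hLk] at haj; simp at haj
          · rw [hLi j hj1 hj2] at haj
            exact (Finset.disjoint_left.1 (hdisj' i j (by omega) (by omega) hne) hai) haj
  · -- spine arcs
    intro i hilt
    by_cases hik : i = k-1
    · rw [hik, polv_km1 k true (by omega)]
      rw [hgi (k-1) (by omega), hgx, show k - 1 + 1 = k from by omega, hgk]
      simpa using hy
    · have h1 : i < k - 1 := by omega
      have hpol : polv k true i = polv (k-1) false i := by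
        have := polv_pred k true i (by omega)
        simpa using this.symm
      rw [hpol, hgi i (by omega), hgi (i+1) (by omega)]
      exact hsp' i h1
  · -- leaf arcs
    intro i hi w hw
    by_cases h1 : i = k-1
    · rw [h1] at hw ⊢
      rw [hLk1] at hw
      rw [polv_km1 k true (by omega), hgi (k-1) (by omega), hgx]
      simpa using hS w hw
    · by_cases h2 : i = k
      · rw [h2, hLk] at hw; simp at hw
      · rw [hLi i h1 h2] at hw
        have hpol : polv k true i = polv (k-1) false i := by
          have := polv_pred k true i (by omega)
          simpa using this.symm
        rw [hpol, hgi i h2]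
        exact hlf' i (by omega) w hw
  · -- pq
    rw [hgi (k-1) (by omega), hgx, hgk]
    simp
  · -- region
    intro w hw
    constructor
    · intro h0; exact absurd h0 (by omega)
    · intro _
      rw [hgk, hgi (k-1) (by omega), hgx]
      have hwmem : w = y ∨ w = x ∨ key x y ≤ key x w := by
        rcases mem_pimg.1 hw with ⟨i, hi, hgiw⟩ | ⟨i, hi, hLiw⟩
        · by_cases hik : i = k
          · left; rw [← hgiw, hik, hgk]
          · rw [hgi i hik] at hgiw
            rcases hold w (by rw [← hgiw]; exact hging i (by omega)) with h1 | h1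
            · exact Or.inr (Or.inl h1)
            · exact Or.inr (Or.inr (by omega))
        · by_cases h1 : i = k-1
          · rw [h1, hLk1] at hLiw
            exact Or.inr (Or.inr (le_of_lt (hSbet w hLiw).1))
          · by_cases h2 : i = k
            · rw [h2, hLk] at hLiw; simp at hLiw
            · rw [hLi i h1 h2] at hLiw
              rcases hold w (hLing i (by omega) w hLiw) with h3 | h3
              · exact Or.inr (Or.inl h3)
              · exact Or.inr (Or.inr (by omega))
      rcases hwmem with h | h | h
      · exact Or.inl h
      · exact Or.inr (Or.inl h)
      · by_cases hwy : w = y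
        · exact Or.inl hwy
        · by_cases hwx : w = x
          · exact Or.inr (Or.inl hwx)
          · refine Or.inr (Or.inr ?_)
            rw [cycBetween_comm (Ne.symm hyx) hwx hwy]
            intro hc
            rw [cycBetween_iff (Ne.symm hyx) hwx] at hc
            omega

lemma ext_even (hk2 : 2 ≤ k) (heven : k % 2 = 0)
    (hgood : PGood A (k-1) false (fun i => if i = k-1 then 0 else ℓ i) (x, z))
    (hzk : ℓ k = 0)
    (hy : A x y = true) (hS : ∀ s ∈ S, A x s = true) (hScard : S.card = ℓ (k-1))
    (hSbet : ∀ s ∈ S, key x z < key x s ∧ key x s < key x y)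
    (hzy : key x z < key x y) (hyx : y ≠ x) :
    PGood A k true ℓ (x, y) := by
  obtain ⟨g', L', hinj', hcard', hgL', hdisj', hsp', hlf', hpq', hreg'⟩ := hgood
  have hk1 : (1:ℕ) ≤ k - 1 := by omega
  have hpq2 : (x, z) = (g' (k-1), g' (k-1-1)) := by simpa using hpq'
  have hgx : g' (k-1) = x := ((Prod.ext_iff).1 hpq2).1.symm
  have hgz : g' (k-1-1) = z := ((Prod.ext_iff).1 hpq2).2.symm
  have hY0 : 0 < key x y := key_pos hyx
  have hzx : z ≠ x := by
    intro h
    have : k - 1 - 1 = k - 1 :=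
      hinj' (k-1-1) (k-1) (by omega) (by omega) (by rw [hgx, hgz, h])
    omega
  have hZ0 : 0 < key x z := key_pos hzx
  have hging : ∀ i, i ≤ k-1 → g' i ∈ pimg g' L' (k-1) :=
    fun i hi => mem_pimg.2 (Or.inl ⟨i, hi, rfl⟩)
  have hLing : ∀ i, i ≤ k-1 → ∀ w ∈ L' i, w ∈ pimg g' L' (k-1) :=
    fun i hi w hw => mem_pimg.2 (Or.inr ⟨i, hi, hw⟩)
  have hold : ∀ w ∈ pimg g' L' (k-1), w = x ∨ key x w ≤ key x z := by
    intro w hw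
    by_cases hwx : w = x
    · exact Or.inl hwx
    · right
      have hodd1 : (k-1) % 2 = 1 := by omega
      have := (hreg' w hw).2 hodd1
      rw [hgx, hgz] at this
      rcases this with h1 | h1 | h1
      · exact absurd h1 hwx
      · rw [h1]
      · rw [cycBetween_iff (Ne.symm hzx) hwx] at h1
        omega
  have hSkey : ∀ s ∈ S, s ≠ x := by
    intro s hs h
    have := (hSbet s hs).1
    rw [h, key_self] at this; omega
  have hSnotold : ∀ s ∈ S, ∀ w ∈ pimg g' L' (k-1), s ≠ w := by
    intro s hs w hw h
    rcases hold w hw with h1 | h1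
    · exact hSkey s hs (h.trans h1)
    · have := (hSbet s hs).1
      rw [h] at this; omega
  have hynotold : ∀ w ∈ pimg g' L' (k-1), y ≠ w := by
    intro w hw h
    rcases hold w hw with h1 | h1
    · exact hyx (h.trans h1)
    · rw [← h] at h1; omega
  set g : ℕ → Fin n := fun i => if i = k then y else g' i with hgdef
  set L : ℕ → Finset (Fin n) := fun i => if i = k-1 then S else if i = k then ∅ else L' i
    with hLdef
  have hgk : g k = y := by simp [hgdef]
  have hgi : ∀ i, i ≠ k → g i = g' i := by intro i h; simp [hgdef, h]
  have hLk1 : L (k-1) = S := by simp [hLdef]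
  have hLk : L k = ∅ := by
    show (if k = k - 1 then S else if k = k then ∅ else L' k) = ∅
    rw [if_neg (show ¬ k = k - 1 by omega), if_pos rfl]
  have hLi : ∀ i, i ≠ k-1 → i ≠ k → L i = L' i := by intro i h1 h2; simp [hLdef, h1, h2]
  refine ⟨g, L, ?_, ?_, ?_, ?_, ?_, ?_, ?_, ?_⟩
  · intro i j hi hj heq
    by_cases hik : i = k <;> by_cases hjk : j = k
    · rw [hik, hjk]
    · exfalso
      rw [hik, hgk, hgi j hjk] at heq
      exact hynotold _ (hging j (by omega)) heq
    · exfalso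
      rw [hjk, hgk, hgi i hik] at heq
      exact hynotold _ (hging i (by omega)) heq.symm
    · exact hinj' i j (by omega) (by omega) (by rw [← hgi i hik, ← hgi j hjk, heq])
  · intro i hi
    by_cases h1 : i = k-1
    · rw [h1, hLk1, hScard]
    · by_cases h2 : i = k
      · rw [h2, hLk, hzk]; simp
      · rw [hLi i h1 h2]
        have := hcard' i (by omega)
        simpa [h1] using this
  · intro i j hi hj
    by_cases hj1 : j = k-1
    · rw [hj1, hLk1]
      by_cases hik : i = k
      · rw [hik, hgk]
        intro hmem
        have := (hSbet y hmem).2; omega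
      · rw [hgi i hik]
        intro hmem
        exact hSnotold _ hmem _ (hging i (by omega)) rfl
    · by_cases hj2 : j = k
      · rw [hj2, hLk]; simp
      · rw [hLi j hj1 hj2]
        by_cases hik : i = k
        · rw [hik, hgk]
          intro hmem
          exact hynotold _ (hLing j (by omega) y hmem) rfl
        · rw [hgi i hik]
          exact hgL' i j (by omega) (by omega)
  · intro i j hi hj hne
    rw [Finset.disjoint_left]
    intro a hai haj
    by_cases hi1 : i = k-1
    · rw [hi1, hLk1] at hai
      by_cases hj2 : j = k
      · rw [hj2, hLk] at haj; simp at haj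
      · have hj1 : j ≠ k-1 := by rw [hi1] at hne; exact fun h => hne h.symm
        rw [hLi j hj1 hj2] at haj
        exact hSnotold a hai a (hLing j (by omega) a haj) rfl
    · by_cases hi2 : i = k
      · rw [hi2, hLk] at hai; simp at hai
      · rw [hLi i hi1 hi2] at hai
        by_cases hj1 : j = k-1
        · rw [hj1, hLk1] at haj
          exact hSnotold a haj a (hLing i (by omega) a hai) rfl
        · by_cases hj2 : j = k
          · rw [hj2, hLk] at haj; simp at haj
          · rw [hLi j hj1 hj2] at haj
            exact (Finset.disjoint_left.1 (hdisj' i j (by omega) (by omega) hne) hai) haj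
  · intro i hilt
    by_cases hik : i = k-1
    · rw [hik, polv_km1 k true (by omega)]
      rw [hgi (k-1) (by omega), hgx, show k - 1 + 1 = k from by omega, hgk]
      simpa using hy
    · have h1 : i < k - 1 := by omega
      have hpol : polv k true i = polv (k-1) false i := by
        have := polv_pred k true i (by omega)
        simpa using this.symm
      rw [hpol, hgi i (by omega), hgi (i+1) (by omega)]
      exact hsp' i h1
  · intro i hi w hw
    by_cases h1 : i = k-1
    · rw [h1] at hw ⊢
      rw [hLk1] at hw
      rw [polv_km1 k true (by omega), hgi (k-1) (by omega), hgx]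
      simpa using hS w hw
    · by_cases h2 : i = k
      · rw [h2, hLk] at hw; simp at hw
      · rw [hLi i h1 h2] at hw
        have hpol : polv k true i = polv (k-1) false i := by
          have := polv_pred k true i (by omega)
          simpa using this.symm
        rw [hpol, hgi i h2]
        exact hlf' i (by omega) w hw
  · rw [hgi (k-1) (by omega), hgx, hgk]
    simp
  · intro w hw
    constructor
    · intro _
      rw [hgk, hgi (k-1) (by omega), hgx]
      have hwmem : w = y ∨ w = x ∨ key x w ≤ key x y := by
        rcases mem_pimg.1 hw with ⟨i, hi, hgiw⟩ | ⟨i, hi, hLiw⟩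
        · by_cases hik : i = k
          · left; rw [← hgiw, hik, hgk]
          · rw [hgi i hik] at hgiw
            rcases hold w (by rw [← hgiw]; exact hging i (by omega)) with h1 | h1
            · exact Or.inr (Or.inl h1)
            · exact Or.inr (Or.inr (by omega))
        · by_cases h1 : i = k-1
          · rw [h1, hLk1] at hLiw
            exact Or.inr (Or.inr (le_of_lt (hSbet w hLiw).2))
          · by_cases h2 : i = k
            · rw [h2, hLk] at hLiw; simp at hLiw
            · rw [hLi i h1 h2] at hLiw
              rcases hold w (hLing i (by omega) w hLiw) with h3 | h3
              · exact Or.inr (Or.inl h3)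
              · exact Or.inr (Or.inr (by omega))
      rcases hwmem with h | h | h
      · rw [h]; exact not_cycBetween_left _ _
      · rw [h]; exact not_cycBetween_right _ _
      · by_cases hwy : w = y
        · rw [hwy]; exact not_cycBetween_left _ _
        · by_cases hwx : w = x
          · rw [hwx]; exact not_cycBetween_right _ _
          · rw [cycBetween_comm (Ne.symm hyx) hwx hwy]
            intro hc
            rw [cycBetween_iff (Ne.symm hyx) hwx] at hc
            push_neg at hc
            have hne : key x w ≠ key x y := fun he => hwy (key_inj he)
            omega
    · intro h1; exact absurd h1 (by omega)

end Ext

section PerX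

variable {A : Fin n → Fin n → Bool} {k : ℕ} {ℓ : ℕ → ℕ}

lemma perx (hA : Loopless A) (hk2 : 2 ≤ k) (hzk : ℓ k = 0) (x : Fin n) :
    ((outNbr A x).filter
        (fun y => PGood A (k-1) false (fun i => if i = k-1 then 0 else ℓ i) (x, y))).card
      ≤ ((outNbr A x).filter (fun y => PGood A k true ℓ (x, y))).card + (ℓ (k-1) + 1) := by
  have hNx : ∀ s ∈ outNbr A x, A x s = true := by
    intro s hs; simpa [outNbr] using hs
  have hNxne : ∀ s ∈ outNbr A x, s ≠ x := by
    intro s hs h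
    have := hNx s hs
    rw [h] at this
    exact hA x this
  rcases Nat.mod_two_eq_zero_or_one k with hpar | hpar
  · -- k even : reversed key
    apply count_main (outNbr A x) _ _ (fun w => n - key x w) (ℓ (k-1) + 1) (by omega)
    · intro a ha b hb h
      have h1 := key_lt x a; have h2 := key_lt x b
      exact key_inj (by omega : key x a = key x b)
    · exact Finset.filter_subset _ _
    · intro z hz y hy hlt hcard
      rw [Finset.mem_filter] at hz ⊢
      refine ⟨hy, ?_⟩
      obtain ⟨S, hSsub, hScard⟩ := Finset.exists_subset_card_eq hcard
      have hkz := key_lt x z; have hky := key_lt x y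
      have hbet : ∀ s ∈ S, key x z < key x s ∧ key x s < key x y := by
        intro s hs
        have := (Finset.mem_filter.1 (hSsub hs)).2
        have hks := key_lt x s
        omega
      exact ext_even hk2 hpar hz.2 hzk (hNx y hy)
        (fun s hs => hNx s (Finset.mem_filter.1 (hSsub hs)).1)
        (by simpa using hScard) hbet (by omega) (hNxne y hy)
  · -- k odd : key itself
    apply count_main (outNbr A x) _ _ (fun w => key x w) (ℓ (k-1) + 1) (by omega)
    · intro a ha b hb h
      exact key_inj h
    · exact Finset.filter_subset _ _
    · intro z hz y hy hlt hcard
      rw [Finset.mem_filter] at hz ⊢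
      refine ⟨hy, ?_⟩
      obtain ⟨S, hSsub, hScard⟩ := Finset.exists_subset_card_eq hcard
      have hbet : ∀ s ∈ S, key x y < key x s ∧ key x s < key x z := by
        intro s hs
        exact (Finset.mem_filter.1 (hSsub hs)).2
      exact ext_odd hk2 hpar hz.2 hzk (hNx y hy)
        (fun s hs => hNx s (Finset.mem_filter.1 (hSsub hs)).1)
        (by simpa using hScard) hbet hlt (hNxne y hy)

lemma fiber_count (A : Fin n → Fin n → Bool) (P : Fin n × Fin n → Prop) :
    ((univ : Finset (Fin n × Fin n)).filter (fun pq => A pq.1 pq.2 = true ∧ P pq)).card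
      = ∑ x : Fin n, ((outNbr A x).filter (fun y => P (x, y))).card := by
  rw [Finset.card_eq_sum_card_fiberwise (f := Prod.fst) (t := univ)
    (fun pq _ => Finset.mem_univ _)]
  apply Finset.sum_congr rfl
  intro x _
  refine Finset.card_bij' (fun pq _ => pq.2) (fun y _ => (x, y)) ?hi ?hj ?left ?right
  case hi =>
    intro pq hpq
    rw [Finset.mem_filter] at hpq
    obtain ⟨hpq1, hfst⟩ := hpq
    rw [Finset.mem_filter] at hpq1
    obtain ⟨-, hA1, hP⟩ := hpq1
    rw [Finset.mem_filter]
    constructor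
    · simp only [outNbr, Finset.mem_filter, Finset.mem_univ, true_and]
      rw [← hfst]; exact hA1
    · have heta : (x, pq.2) = pq := by rw [← hfst]
      rw [heta]; exact hP
  case hj =>
    intro y hy
    rw [Finset.mem_filter] at hy
    obtain ⟨hyN, hyP⟩ := hy
    simp only [outNbr, Finset.mem_filter, Finset.mem_univ, true_and] at hyN
    rw [Finset.mem_filter]
    refine ⟨?_, rfl⟩
    rw [Finset.mem_filter]
    exact ⟨Finset.mem_univ _, hyN, hyP⟩
  case left =>
    intro pq hpq
    rw [Finset.mem_filter] at hpq
    show (x, pq.2) = pq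
    rw [← hpq.2]
  case right =>
    intro y hy; rfl

lemma step_count (hA : Loopless A) (hk2 : 2 ≤ k) (hzk : ℓ k = 0) :
    ((univ : Finset (Fin n × Fin n)).filter (fun pq => A pq.1 pq.2 = true ∧
        PGood A (k-1) false (fun i => if i = k-1 then 0 else ℓ i) pq)).card
      ≤ ((univ : Finset (Fin n × Fin n)).filter
            (fun pq => A pq.1 pq.2 = true ∧ PGood A k true ℓ pq)).card
        + (ℓ (k-1) + 1) * (outVerts A).card := by
  rw [fiber_count A (fun pq => PGood A (k-1) false (fun i => if i = k-1 then 0 else ℓ i) pq),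
    fiber_count A (fun pq => PGood A k true ℓ pq)]
  have hperx : ∀ x : Fin n,
      ((outNbr A x).filter
          (fun y => PGood A (k-1) false (fun i => if i = k-1 then 0 else ℓ i) (x, y))).card
        ≤ ((outNbr A x).filter (fun y => PGood A k true ℓ (x, y))).card
          + (if (outNbr A x).card ≠ 0 then ℓ (k-1) + 1 else 0) := by
    intro x
    by_cases hne : (outNbr A x).card ≠ 0
    · rw [if_pos hne]
      exact perx hA hk2 hzk x
    · rw [if_neg hne]
      push_neg at hne
      have h1 : outNbr A x = ∅ := Finset.card_eq_zero.1 hne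
      have h2 : ∀ (P : Fin n → Prop), ((outNbr A x).filter P).card = 0 := by
        intro P
        rw [h1]
        simp
      rw [h2, h2]
  calc ∑ x : Fin n, ((outNbr A x).filter
          (fun y => PGood A (k-1) false (fun i => if i = k-1 then 0 else ℓ i) (x, y))).card
      ≤ ∑ x : Fin n, (((outNbr A x).filter (fun y => PGood A k true ℓ (x, y))).card
          + (if (outNbr A x).card ≠ 0 then ℓ (k-1) + 1 else 0)) :=
        Finset.sum_le_sum (fun x _ => hperx x)
    _ = (∑ x : Fin n, ((outNbr A x).filter (fun y => PGood A k true ℓ (x, y))).card)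
          + ∑ x : Fin n, (if (outNbr A x).card ≠ 0 then ℓ (k-1) + 1 else 0) :=
        Finset.sum_add_distrib
    _ = _ := by
        congr 1
        rw [← Finset.sum_filter, Finset.sum_const, smul_eq_mul, mul_comm]
        congr 2

end PerX

section Arith

lemma pcount_pos (k : ℕ) (b : Bool) (ℓ : ℕ → ℕ) (hk : 1 ≤ k) :
    1 ≤ pcount k b ℓ (b) := by
  unfold pcount
  have hmem : k - 1 ∈ Finset.range (k+1) := by simp
  calc (1:ℕ) = (if polv k b (k-1) = b then 1 else ℓ (k-1)) := by rw [polv_km1 k b hk]; simp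
    _ ≤ _ := Finset.single_le_sum (f := fun i => if polv k b i = b then 1 else ℓ i)
        (fun i _ => by positivity) hmem

lemma pcount_aux (k : ℕ) (ℓ : ℕ → ℕ) (bb : Bool) :
    ∑ i ∈ Finset.range k, (if polv (k+1) true i = bb then 1 else ℓ i)
      = ∑ i ∈ Finset.range k, (if polv k false i = bb then 1
          else (fun i => if i = k then 0 else ℓ i) i) := by
  apply Finset.sum_congr rfl
  intro i hi
  rw [Finset.mem_range] at hi
  have hpolv : polv k false i = polv (k+1) true i := by
    have := polv_pred (k+1) true i (by omega)
    simpa using this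
  rw [hpolv]
  simp only [if_neg (show ¬ i = k by omega)]

lemma pcount_kk (k : ℕ) : polv (k+1) true k = true := by
  have := polv_km1 (k+1) true (by omega)
  simpa using this

lemma pcount_k1 (k : ℕ) : polv (k+1) true (k+1) = false := by
  have := polv_k (k+1) true
  simpa using this

lemma pcount_step_p (k : ℕ) (ℓ : ℕ → ℕ) (hzk : ℓ (k+1) = 0) :
    pcount (k+1) true ℓ true = pcount k false (fun i => if i = k then 0 else ℓ i) true := by
  unfold pcount
  rw [Finset.sum_range_succ (n := k+1), Finset.sum_range_succ (n := k),
    Finset.sum_range_succ (n := k)]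
  rw [pcount_aux k ℓ true]
  have hpolv : polv k false k = polv (k+1) true k := by
    have := polv_pred (k+1) true k (by omega)
    simpa using this
  rw [hpolv, pcount_kk, pcount_k1]
  simp [hzk]

lemma pcount_step_q (k : ℕ) (ℓ : ℕ → ℕ) :
    pcount (k+1) true ℓ false
      = pcount k false (fun i => if i = k then 0 else ℓ i) false + (ℓ k + 1) := by
  unfold pcount
  rw [Finset.sum_range_succ (n := k+1), Finset.sum_range_succ (n := k),
    Finset.sum_range_succ (n := k)]
  rw [pcount_aux k ℓ false]
  have hpolv : polv k false k = polv (k+1) true k := by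
    have := polv_pred (k+1) true k (by omega)
    simpa using this
  rw [hpolv, pcount_kk, pcount_k1]
  simp
  omega

end Arith

section Flip

variable {A : Fin n → Fin n → Bool} {k : ℕ} {ℓ : ℕ → ℕ}

lemma arcCount_flip (A : Fin n → Fin n → Bool) : arcCount (flip A) = arcCount A := by
  unfold arcCount
  apply Finset.card_bij' (fun pq _ => Prod.swap pq) (fun pq _ => Prod.swap pq)
  · intro pq hpq
    rw [Finset.mem_filter] at hpq ⊢
    exact ⟨Finset.mem_univ _, hpq.2⟩
  · intro pq hpq
    rw [Finset.mem_filter] at hpq ⊢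
    exact ⟨Finset.mem_univ _, hpq.2⟩
  · intro pq _; simp
  · intro pq _; simp

lemma outVerts_flip (A : Fin n → Fin n → Bool) : outVerts (flip A) = inVerts A := by
  ext a
  simp [outVerts, inVerts, outNbr, inNbr, flip, Finset.eq_empty_iff_forall_notMem]
  exact ⟨fun ⟨x, hx⟩ => ⟨x, (Finset.mem_filter.1 hx).2⟩,
    fun ⟨x, hx⟩ => ⟨x, Finset.mem_filter.2 ⟨Finset.mem_univ _, hx⟩⟩⟩

lemma inVerts_flip (A : Fin n → Fin n → Bool) : inVerts (flip A) = outVerts A := by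
  ext a
  simp [outVerts, inVerts, outNbr, inNbr, flip, Finset.eq_empty_iff_forall_notMem]
  exact ⟨fun ⟨x, hx⟩ => ⟨x, (Finset.mem_filter.1 hx).2⟩,
    fun ⟨x, hx⟩ => ⟨x, Finset.mem_filter.2 ⟨Finset.mem_univ _, hx⟩⟩⟩

lemma pcount_flip (k : ℕ) (ℓ : ℕ → ℕ) (bb : Bool) :
    pcount k false ℓ bb = pcount k true ℓ (!bb) := by
  unfold pcount
  apply Finset.sum_congr rfl
  intro i _
  have h : polv k false i = !polv k true i := by
    have := polv_not k true i
    simpa using this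
  rw [h]
  cases hp : polv k true i <;> cases bb <;> simp

lemma good_flip_card (A : Fin n → Fin n → Bool) (k : ℕ) (ℓ : ℕ → ℕ) :
    ((univ : Finset (Fin n × Fin n)).filter
        (fun pq => flip A pq.1 pq.2 = true ∧ PGood (flip A) k true ℓ pq)).card
      = ((univ : Finset (Fin n × Fin n)).filter
          (fun pq => A pq.1 pq.2 = true ∧ PGood A k false ℓ pq)).card := by
  apply Finset.card_bij' (fun pq _ => Prod.swap pq) (fun pq _ => Prod.swap pq)
  · intro pq hpq
    rw [Finset.mem_filter] at hpq ⊢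
    refine ⟨Finset.mem_univ _, hpq.2.1, ?_⟩
    exact PGood.flip hpq.2.2
  · intro pq hpq
    rw [Finset.mem_filter] at hpq ⊢
    refine ⟨Finset.mem_univ _, hpq.2.1, ?_⟩
    exact PGood.flip hpq.2.2
  · intro pq _; simp
  · intro pq _; simp

end Flip

section Main

lemma base_good {A : Fin n → Fin n → Bool} {ℓ : ℕ → ℕ} (hA : Loopless A)
    (h0 : ℓ 0 = 0) (h1 : ℓ 1 = 0) (pq : Fin n × Fin n) (hpq : A pq.1 pq.2 = true) :
    PGood A 1 true ℓ pq := by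
  have hne : pq.1 ≠ pq.2 := by
    intro h
    have := hpq
    rw [h] at this
    exact hA pq.2 this
  have e0 : polv 1 true 0 = true := by simp [polv]
  refine ⟨fun i => if i = 0 then pq.1 else pq.2, fun _ => ∅, ?_, ?_, ?_, ?_, ?_, ?_, ?_, ?_⟩
  · intro i j hi hj h
    interval_cases i <;> interval_cases j <;> simp_all
  · intro i hi
    interval_cases i <;> simp [h0, h1]
  · intro i j _ _
    simp
  · intro i j _ _ _
    simp
  · intro i hi
    interval_cases i
    simp [e0]
    exact hpq
  · intro i _ z hz
    simp at hz
  · simp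
  · intro w hw
    constructor
    · intro h; exact absurd h (by omega)
    · intro _
      rcases mem_pimg.1 hw with ⟨i, hi, hgi⟩ | ⟨i, hi, hLi⟩
      · interval_cases i
        · exact Or.inr (Or.inl hgi.symm)
        · exact Or.inl hgi.symm
      · simp at hLi

theorem pure_main : ∀ k : ℕ, 1 ≤ k → ∀ (A : Fin n → Fin n → Bool), Loopless A →
    ∀ (b : Bool) (ℓ : ℕ → ℕ), ℓ 0 = 0 → ℓ k = 0 →
    arcCount A - (pcount k b ℓ true - 1) * (inVerts A).card
        - (pcount k b ℓ false - 1) * (outVerts A).card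
      ≤ ((univ : Finset (Fin n × Fin n)).filter
          (fun pq => A pq.1 pq.2 = true ∧ PGood A k b ℓ pq)).card := by
  intro k
  induction k with
  | zero => intro h; exact absurd h (by omega)
  | succ k ih =>
    intro _ A hA b ℓ h0 hk
    have main_true : ∀ (A : Fin n → Fin n → Bool), Loopless A →
        ∀ (ℓ : ℕ → ℕ), ℓ 0 = 0 → ℓ (k+1) = 0 →
        arcCount A - (pcount (k+1) true ℓ true - 1) * (inVerts A).card
            - (pcount (k+1) true ℓ false - 1) * (outVerts A).card
          ≤ ((univ : Finset (Fin n × Fin n)).filter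
              (fun pq => A pq.1 pq.2 = true ∧ PGood A (k+1) true ℓ pq)).card := by
      clear h0 hk hA A b ℓ
      intro A hA ℓ h0 hk
      rcases Nat.eq_zero_or_pos k with hk0 | hkpos
      · subst hk0
        have e0 : polv 1 true 0 = true := by simp [polv]
        have e1 : polv 1 true 1 = false := by simp [polv]
        have hp : pcount 1 true ℓ true = 1 := by
          simp [pcount, Finset.sum_range_succ, e0, e1, hk]
        have hq : pcount 1 true ℓ false = 1 := by
          simp [pcount, Finset.sum_range_succ, e0, e1, h0]
        rw [hp, hq]
        simp only [Nat.sub_self, zero_mul, Nat.sub_zero]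
        unfold arcCount
        apply Finset.card_le_card
        intro pq hpq
        rw [Finset.mem_filter] at hpq ⊢
        exact ⟨hpq.1, hpq.2, base_good hA h0 hk pq hpq.2⟩
      · -- inductive step, K = k+1 ≥ 2
        have ihh := ih hkpos A hA false (fun i => if i = k then 0 else ℓ i)
          (by simp [(by omega : ¬ (0:ℕ) = k), h0]) (by simp)
        have hstep := step_count (A := A) (k := k+1) (ℓ := ℓ) hA (by omega) hk
        simp only [Nat.add_sub_cancel] at hstep
        have hp := pcount_step_p k ℓ hk
        have hq := pcount_step_q k ℓ
        have hqpos := pcount_pos k false (fun i => if i = k then 0 else ℓ i) hkpos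
        set q' := pcount k false (fun i => if i = k then 0 else ℓ i) false with hq'
        set p' := pcount k false (fun i => if i = k then 0 else ℓ i) true with hp'
        have hmul : (pcount (k+1) true ℓ false - 1) * (outVerts A).card
            = (q' - 1) * (outVerts A).card + (ℓ k + 1) * (outVerts A).card := by
          rw [hq]
          rw [show q' + (ℓ k + 1) - 1 = (q' - 1) + (ℓ k + 1) from by omega]
          rw [Nat.add_mul]
        rw [hp, hmul]
        -- note (k+1)-1 = k definitionally
        omega
    cases b
    · have h2 := main_true (flip A) (fun v h => hA v h) ℓ h0 hk
      rw [arcCount_flip, inVerts_flip, outVerts_flip, good_flip_card] at h2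
      rw [pcount_flip (k+1) ℓ true, pcount_flip (k+1) ℓ false]
      simp only [Bool.not_true, Bool.not_false] at *
      omega
    · exact main_true A hA ℓ h0 hk

end Main

end Stmt8

namespace Stmt8
open SimpleGraph

variable {W : Type*} {G : SimpleGraph W}

lemma getVert_mem_support {a b : W} (p : G.Walk a b) (i : ℕ) :
    p.getVert i ∈ p.support := by
  by_cases h : i ≤ p.length
  · exact Walk.mem_support_iff_exists_getVert.2 ⟨i, rfl, h⟩
  · rw [Walk.getVert_of_length_le p (by omega)]
    exact Walk.end_mem_support p

lemma getVert_injOn_of_isPath : ∀ {a b : W} (p : G.Walk a b), p.IsPath →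
    ∀ i, i ≤ p.length → ∀ j, j ≤ p.length → p.getVert i = p.getVert j → i = j := by
  intro a b p
  induction p with
  | nil => intro _ i hi j hj _; simp at hi hj; omega
  | cons h q ih =>
    intro hp i hi j hj heq
    rw [Walk.cons_isPath_iff] at hp
    obtain ⟨hq, hnot⟩ := hp
    match i, j with
    | 0, 0 => rfl
    | 0, (m+1) =>
      exfalso
      rw [Walk.getVert_zero, Walk.getVert_cons_succ] at heq
      exact hnot (heq ▸ getVert_mem_support q m)
    | (m+1), 0 =>
      exfalso
      rw [Walk.getVert_zero, Walk.getVert_cons_succ] at heq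
      exact hnot (heq ▸ getVert_mem_support q m)
    | (m+1), (l+1) =>
      rw [Walk.getVert_cons_succ, Walk.getVert_cons_succ] at heq
      simp only [Walk.length_cons] at hi hj
      have := ih hq m (by omega) l (by omega) heq
      omega

/-- the sub-walk of `p` from `getVert i` to `getVert (i+d)`. -/
def seg {a b : W} (p : G.Walk a b) : (i d : ℕ) → i + d ≤ p.length →
    G.Walk (p.getVert i) (p.getVert (i+d))
  | _, 0, _ => Walk.nil
  | i, d+1, h =>
      (Walk.cons (p.adj_getVert_succ (by omega)) (seg p (i+1) d (by omega))).copy rfl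
        (congrArg p.getVert (by omega))

lemma seg_support {a b : W} (p : G.Walk a b) :
    ∀ (d i : ℕ) (h : i + d ≤ p.length),
      (seg p i d h).support = (List.range (d+1)).map (fun j => p.getVert (i+j)) := by
  intro d
  induction d with
  | zero =>
    intro i h
    show (Walk.nil : G.Walk (p.getVert i) (p.getVert (i+0))).support = _
    rw [Walk.support_nil, List.range_succ, List.range_zero]
    simp
  | succ d ih =>
    intro i h
    show ((Walk.cons (p.adj_getVert_succ (by omega)) (seg p (i+1) d (by omega))).copy rfl
        (congrArg p.getVert (by omega))).support = _
    rw [Walk.support_copy, Walk.support_cons, ih (i+1) (by omega)]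
    conv_rhs => rw [List.range_succ_eq_map]
    simp only [List.map_cons, List.map_map]
    congr 1
    apply List.map_congr_left
    intro c _
    simp only [Function.comp_apply]
    congr 1
    omega

lemma seg_length {a b : W} (p : G.Walk a b) :
    ∀ (d i : ℕ) (h : i + d ≤ p.length), (seg p i d h).length = d := by
  intro d
  induction d with
  | zero => intro i h; rfl
  | succ d ih =>
    intro i h
    show ((Walk.cons (p.adj_getVert_succ (by omega)) (seg p (i+1) d (by omega))).copy rfl
        (congrArg p.getVert (by omega))).length = d + 1
    rw [Walk.length_copy, Walk.length_cons, ih (i+1) (by omega)]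

lemma seg_isPath {a b : W} (p : G.Walk a b) (hp : p.IsPath) (i d : ℕ)
    (h : i + d ≤ p.length) : (seg p i d h).IsPath := by
  rw [Walk.isPath_def, seg_support]
  apply List.Nodup.map_on
  · intro c hc e he heq
    rw [List.mem_range] at hc he
    have := getVert_injOn_of_isPath p hp (i+c) (by omega) (i+e) (by omega) heq
    omega
  · exact List.nodup_range

/-- walk along the path between two indexed vertices. -/
def spineWalk {a b : W} (p : G.Walk a b) (i j : ℕ) (hi : i ≤ p.length)
    (hj : j ≤ p.length) : G.Walk (p.getVert i) (p.getVert j) :=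
  if h : i ≤ j then (seg p i (j-i) (by omega)).copy rfl (congrArg p.getVert (by omega))
  else ((seg p j (i-j) (by omega)).copy rfl (congrArg p.getVert (by omega))).reverse

lemma spineWalk_isPath {a b : W} (p : G.Walk a b) (hp : p.IsPath) (i j : ℕ)
    (hi : i ≤ p.length) (hj : j ≤ p.length) : (spineWalk p i j hi hj).IsPath := by
  unfold spineWalk
  split_ifs with h
  · rw [Walk.isPath_copy]
    exact seg_isPath p hp _ _ _
  · apply Walk.IsPath.reverse
    rw [Walk.isPath_copy]
    exact seg_isPath p hp _ _ _

lemma spineWalk_support_subset {a b : W} (p : G.Walk a b) (i j : ℕ)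
    (hi : i ≤ p.length) (hj : j ≤ p.length) :
    ∀ x ∈ (spineWalk p i j hi hj).support, ∃ m ≤ p.length, p.getVert m = x := by
  intro x hx
  unfold spineWalk at hx
  split_ifs at hx with h
  · rw [Walk.support_copy, seg_support] at hx
    rw [List.mem_map] at hx
    obtain ⟨c, hc, hcx⟩ := hx
    rw [List.mem_range] at hc
    exact ⟨i + c, by omega, hcx⟩
  · rw [Walk.support_reverse, List.mem_reverse, Walk.support_copy, seg_support] at hx
    rw [List.mem_map] at hx
    obtain ⟨c, hc, hcx⟩ := hx
    rw [List.mem_range] at hc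
    exact ⟨j + c, by omega, hcx⟩

lemma chord (htree : G.IsTree) {a b : W} (p : G.Walk a b) (hp : p.IsPath)
    (i j : ℕ) (hi : i ≤ p.length) (hj : j ≤ p.length)
    (hadj : G.Adj (p.getVert i) (p.getVert j)) : j = i + 1 ∨ i = j + 1 := by
  have key : ∀ i j : ℕ, i < j → (hi : i ≤ p.length) → (hj : j ≤ p.length) →
      G.Adj (p.getVert i) (p.getVert j) → j = i + 1 := by
    intro i j hij hi hj hadj
    have w1 : G.Walk (p.getVert i) (p.getVert j) := Walk.cons hadj Walk.nil
    have hw1 : (Walk.cons hadj (Walk.nil : G.Walk (p.getVert j) (p.getVert j))).IsPath := by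
      rw [Walk.cons_isPath_iff]
      exact ⟨Walk.IsPath.nil, by simp [hadj.ne]⟩
    have hw2 : ((seg p i (j-i) (by omega)).copy rfl
        (congrArg p.getVert (by omega : i + (j-i) = j))).IsPath := by
      rw [Walk.isPath_copy]
      exact seg_isPath p hp _ _ _
    have heq := (htree.existsUnique_path (p.getVert i) (p.getVert j)).unique hw1 hw2
    have hlen := congrArg Walk.length heq
    rw [Walk.length_cons, Walk.length_nil, Walk.length_copy, seg_length] at hlen
    omega
  rcases lt_trichotomy i j with h | h | h
  · exact Or.inl (key i j h hi hj hadj)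
  · exact absurd (h ▸ hadj) (G.irrefl)
  · exact Or.inr (key j i h hj hi hadj.symm)

lemma offspine (htree : G.IsTree) {a b : W} (P : G.Walk a b) (hP : P.IsPath)
    (hcat : ∀ x, x ∈ P.support ∨ ∃ j, 0 < j ∧ j < P.length ∧ G.Adj x (P.getVert j))
    {x : W} (hx : x ∉ P.support) :
    ∃ i, 0 < i ∧ i < P.length ∧ G.Adj x (P.getVert i) ∧
      ∀ z, G.Adj x z → z = P.getVert i := by
  rcases hcat x with h | ⟨i, hi0, hik, hadjx⟩
  · exact absurd h hx
  refine ⟨i, hi0, hik, hadjx, ?_⟩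
  intro z hz
  by_contra hne
  by_cases hzs : z ∈ P.support
  · obtain ⟨j, hgj, hj⟩ := Walk.mem_support_iff_exists_getVert.1 hzs
    have hw1 : (Walk.cons hz.symm (Walk.cons hadjx
        (Walk.nil : G.Walk (P.getVert i) (P.getVert i)))).IsPath := by
      rw [Walk.isPath_def]
      simp [Walk.support_cons, List.nodup_cons, hz.ne', hadjx.ne, hne]
    have hw2 : ((spineWalk P j i hj (le_of_lt hik)).copy hgj rfl).IsPath := by
      rw [Walk.isPath_copy]
      exact spineWalk_isPath P hP _ _ _ _
    have heq := (htree.existsUnique_path z (P.getVert i)).unique hw1 hw2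
    have hxw1 : x ∈ (Walk.cons hz.symm (Walk.cons hadjx
        (Walk.nil : G.Walk (P.getVert i) (P.getVert i)))).support := by
      simp [Walk.support_cons]
    rw [heq] at hxw1
    rw [Walk.support_copy] at hxw1
    obtain ⟨m, hm, hgm⟩ := spineWalk_support_subset P j i hj (le_of_lt hik) x hxw1
    exact hx (Walk.mem_support_iff_exists_getVert.2 ⟨m, hgm, hm⟩)
  · rcases hcat z with h | ⟨j, hj0, hjk, hadjz⟩
    · exact absurd h hzs
    have hxsj : x ≠ P.getVert j := by
      intro h
      exact hx (h ▸ getVert_mem_support P j)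
    have hzsj : z ≠ P.getVert j := by
      intro h
      exact hzs (h ▸ getVert_mem_support P j)
    have hw1 : (Walk.cons hz (Walk.cons hadjz
        (Walk.nil : G.Walk (P.getVert j) (P.getVert j)))).IsPath := by
      rw [Walk.isPath_def]
      simp [Walk.support_cons, List.nodup_cons, hz.ne, hxsj, hzsj]
    have hw2 : (Walk.cons hadjx (spineWalk P i j (le_of_lt hik) (le_of_lt hjk))).IsPath := by
      rw [Walk.cons_isPath_iff]
      refine ⟨spineWalk_isPath P hP _ _ _ _, ?_⟩
      intro hmem
      obtain ⟨m, hm, hgm⟩ := spineWalk_support_subset P i j _ _ x hmem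
      exact hx (Walk.mem_support_iff_exists_getVert.2 ⟨m, hgm, hm⟩)
    have heq := (htree.existsUnique_path x (P.getVert j)).unique hw1 hw2
    have hzw1 : z ∈ (Walk.cons hz (Walk.cons hadjz
        (Walk.nil : G.Walk (P.getVert j) (P.getVert j)))).support := by
      simp [Walk.support_cons]
    rw [heq] at hzw1
    rw [Walk.support_cons] at hzw1
    rcases List.mem_cons.1 hzw1 with h | h
    · exact hz.ne h.symm
    · obtain ⟨m, hm, hgm⟩ := spineWalk_support_subset P i j _ _ z h
      exact hzs (Walk.mem_support_iff_exists_getVert.2 ⟨m, hgm, hm⟩)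

end Stmt8

/-- A convex digraph of order `n` contains at least
`a(D) − (|T⁺|−1)·|D⁻| − (|T⁻|−1)·|D⁺|` arcs that are good for a given antidirected
caterpillar `T` (given with its spine: the path `Q.concat hadj` ending with the final
edge between `v` and the final vertex `u`). -/
theorem stmt_8 (n : ℕ) (hn : 0 < n)
    {W : Type*} [Fintype W] [DecidableEq W]
    (T : W → W → Bool) (hT : Antidirected T)
    (htree : (underG T).IsTree)
    (w v u : W) (Q : (underG T).Walk w v) (hadj : (underG T).Adj v u)
    (hP : (Q.concat hadj).IsPath)
    (hcat : ∀ x : W, x ∈ (Q.concat hadj).support ∨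
      ∃ y ∈ (Q.concat hadj).support, y ≠ w ∧ y ≠ u ∧ (underG T).Adj x y)
    (A : Fin n → Fin n → Bool) (hloop : Loopless A) :
    arcCount A - ((outVerts T).card - 1) * (inVerts A).card
        - ((inVerts T).card - 1) * (outVerts A).card ≤
      {pq : Fin n × Fin n | A pq.1 pq.2 ∧
        GoodArc A T u v (Q.concat hadj).length pq}.ncard := by
  classical
  obtain ⟨hconn, hacyc⟩ := htree
  have htree' : (underG T).IsTree := ⟨hconn, hacyc⟩
  set P : (underG T).Walk w u := Q.concat hadj with hPdef
  set k : ℕ := P.length with hkdef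
  set s : ℕ → W := fun i => P.getVert i with hsdef
  have hkQ : k = Q.length + 1 := by rw [hkdef, hPdef, SimpleGraph.Walk.length_concat]
  have hk1 : 1 ≤ k := by omega
  have hs0 : s 0 = w := P.getVert_zero
  have hsk : s k = u := P.getVert_length
  have hskm : s (k-1) = v := by
    show P.getVert (k-1) = v
    rw [hPdef, SimpleGraph.Walk.concat_eq_append, SimpleGraph.Walk.getVert_append]
    rw [if_neg (by omega)]
    rw [show k - 1 - Q.length = 0 from by omega, SimpleGraph.Walk.getVert_zero]
  have hinj : ∀ i, i ≤ k → ∀ j, j ≤ k → s i = s j → i = j :=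
    Stmt8.getVert_injOn_of_isPath P hP
  have hadji : ∀ i, i < k → (underG T).Adj (s i) (s (i+1)) := fun i hi =>
    P.adj_getVert_succ hi
  have hedge : ∀ a c : W, (underG T).Adj a c ↔ a ≠ c ∧ (T a c = true ∨ T c a = true) := by
    intro a c
    constructor
    · intro h
      rw [underG, SimpleGraph.fromRel_adj] at h
      exact h
    · intro h
      rw [underG, SimpleGraph.fromRel_adj]
      exact h
  have hTbool : ∀ a c : W, ¬ T a c = true → T a c = false := by
    intro a c h
    cases hac : T a c
    · rfl
    · exact absurd hac h
  have hTirr : ∀ a : W, T a a = false := by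
    intro a
    apply hTbool
    intro h
    exact hT a a a h h
  have hTne : ∀ a c : W, T a c = true → a ≠ c := by
    intro a c h heq
    rw [heq] at h
    rw [hTirr c] at h
    exact Bool.false_ne_true h
  have hTadj : ∀ a c : W, T a c = true → (underG T).Adj a c := fun a c h =>
    (hedge a c).2 ⟨hTne a c h, Or.inl h⟩
  have honeway : ∀ a c : W, T a c = true → T c a = false := by
    intro a c h
    apply hTbool
    intro h2
    exact hT a c a h h2
  set b : Bool := T v u with hbdef
  have spine_arc : ∀ i, i < k → T (s i) (s (i+1)) = Stmt8.polv k b i := by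
    have aux : ∀ d i, i + d + 1 = k → T (s i) (s (i+1)) = Stmt8.polv k b i := by
      intro d
      induction d with
      | zero =>
        intro i hi
        have hi' : i = k - 1 := by omega
        subst hi'
        rw [show k - 1 + 1 = k from by omega, hskm, hsk, Stmt8.polv_km1 k b hk1]
      | succ d ih =>
        intro i hi
        have ih1 := ih (i+1) (by omega)
        rw [Stmt8.polv_succ] at ih1
        have hadj_i := hadji i (by omega)
        have hadj_i1 := hadji (i+1) (by omega)
        cases hpol : Stmt8.polv k b i
        · rw [hpol] at ih1
          simp only [Bool.not_false] at ih1
          apply hTbool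
          intro hcon
          exact hT _ _ _ hcon ih1
        · rw [hpol] at ih1
          simp only [Bool.not_true] at ih1
          have hback : T (s (i+2)) (s (i+1)) = true := by
            rcases ((hedge _ _).1 hadj_i1).2 with h | h
            · rw [show i + 1 + 1 = i + 2 from rfl] at ih1
              rw [ih1] at h
              exact absurd h Bool.false_ne_true
            · exact h
          by_cases hcon : T (s i) (s (i+1)) = true
          · exact hcon
          · exfalso
            have hfwd : T (s i) (s (i+1)) = false := hTbool _ _ hcon
            have hback2 : T (s (i+1)) (s i) = true := by
              rcases ((hedge _ _).1 hadj_i).2 with h | h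
              · rw [hfwd] at h
                exact absurd h Bool.false_ne_true
              · exact h
            exact hT _ _ _ hback hback2
    intro i hi
    exact aux (k - i - 1) i (by omega)
  have spine_arc' : ∀ i, i < k → T (s (i+1)) (s i) = !(Stmt8.polv k b i) := by
    intro i hi
    cases hpol : Stmt8.polv k b i
    · simp only [Bool.not_false]
      have hfwd : T (s i) (s (i+1)) = false := by rw [spine_arc i hi, hpol]
      rcases ((hedge _ _).1 (hadji i hi)).2 with h | h
      · rw [hfwd] at h
        exact absurd h Bool.false_ne_true
      · exact h
    · simp only [Bool.not_true]
      apply honeway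
      rw [spine_arc i hi, hpol]
  have hTuv : T u v = !b := by
    have h := spine_arc' (k-1) (by omega)
    rw [show k - 1 + 1 = k from by omega, hsk, hskm, Stmt8.polv_km1 k b hk1] at h
    exact h
  have hcat' : ∀ x : W, x ∈ P.support ∨ ∃ j, 0 < j ∧ j < P.length ∧
      (underG T).Adj x (P.getVert j) := by
    intro x
    rcases hcat x with h | ⟨y, hy, hyw, hyu, hxy⟩
    · exact Or.inl h
    · right
      obtain ⟨j, hgj, hjk⟩ := SimpleGraph.Walk.mem_support_iff_exists_getVert.1 hy
      have hj0 : j ≠ 0 := by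
        intro h
        apply hyw
        rw [← hgj, h]
        exact hs0
      have hjk' : j ≠ k := by
        intro h
        apply hyu
        rw [← hgj, h]
        exact hsk
      exact ⟨j, by omega, by omega, hgj ▸ hxy⟩
  have hattE : ∀ x : W, ∃ i, x ∉ P.support → (0 < i ∧ i < k ∧ (underG T).Adj x (s i) ∧
      ∀ z, (underG T).Adj x z → z = s i) := by
    intro x
    by_cases hx : x ∈ P.support
    · exact ⟨0, fun h => absurd hx h⟩
    · obtain ⟨i, h1, h2, h3, h4⟩ := Stmt8.offspine htree' P hP hcat' hx
      exact ⟨i, fun _ => ⟨h1, h2, h3, h4⟩⟩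
  choose att hatt using hattE
  set Leaf : ℕ → Finset W := fun i =>
    univ.filter (fun x => x ∉ P.support ∧ (underG T).Adj x (s i)) with hLeafdef
  set ℓT : ℕ → ℕ := fun i => (Leaf i).card with hℓTdef
  have hmemLeaf : ∀ x i, x ∈ Leaf i ↔ x ∉ P.support ∧ (underG T).Adj x (s i) := by
    intro x i
    rw [hLeafdef]
    simp
  have hattLe : ∀ x, x ∉ P.support → att x ≤ k := fun x hx => le_of_lt (hatt x hx).2.1
  have hxLeaf : ∀ x (hx : x ∉ P.support), x ∈ Leaf (att x) := by
    intro x hx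
    rw [hmemLeaf]
    exact ⟨hx, (hatt x hx).2.2.1⟩
  have hLeafAtt : ∀ x i, i ≤ k → x ∈ Leaf i → att x = i := by
    intro x i hik hmem
    rw [hmemLeaf] at hmem
    have h := (hatt x hmem.1).2.2.2 (s i) hmem.2
    exact hinj _ (hattLe x hmem.1) _ hik h.symm
  have hl0 : ℓT 0 = 0 := by
    rw [hℓTdef]
    simp only [Finset.card_eq_zero]
    rw [Finset.eq_empty_iff_forall_notMem]
    intro x hx
    have h := hLeafAtt x 0 (by omega) hx
    have := (hatt x ((hmemLeaf x 0).1 hx).1).1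
    omega
  have hlk : ℓT k = 0 := by
    rw [hℓTdef]
    simp only [Finset.card_eq_zero]
    rw [Finset.eq_empty_iff_forall_notMem]
    intro x hx
    have h := hLeafAtt x k le_rfl hx
    have := (hatt x ((hmemLeaf x k).1 hx).1).2.1
    omega
  have hsOut : ∀ i, i ≤ k → ((∃ c, T (s i) c = true) ↔ Stmt8.polv k b i = true) := by
    intro i hik
    constructor
    · rintro ⟨c, hc⟩
      cases hpol : Stmt8.polv k b i
      · exfalso
        by_cases hik' : i < k
        · have h := spine_arc' i hik'
          rw [hpol] at h
          simp only [Bool.not_false] at h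
          exact hT _ _ _ h hc
        · have hik2 : i = k := by omega
          have hpk := Stmt8.polv_k k b
          rw [hik2, hpk] at hpol
          have hb : b = true := by
            cases hb2 : b
            · rw [hb2] at hpol
              exact absurd hpol (by simp)
            · rfl
          have hvu : T v u = true := by rw [← hbdef]; exact hb
          rw [hik2, hsk] at hc
          exact hT v u c hvu hc
      · rfl
    · intro hpol
      by_cases hik' : i < k
      · exact ⟨s (i+1), by rw [spine_arc i hik', hpol]⟩
      · have hik2 : i = k := by omega
        have hpk := Stmt8.polv_k k b
        rw [hik2, hpk] at hpol
        have hb : b = false := by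
          cases hb2 : b
          · rfl
          · rw [hb2] at hpol
            exact absurd hpol (by simp)
        refine ⟨v, ?_⟩
        rw [hik2, hsk, hTuv, hb]
        rfl
  have hsIn : ∀ i, i ≤ k → ((∃ c, T c (s i) = true) ↔ Stmt8.polv k b i = false) := by
    intro i hik
    constructor
    · rintro ⟨c, hc⟩
      cases hpol : Stmt8.polv k b i
      · rfl
      · exfalso
        by_cases hik' : i < k
        · have h := spine_arc i hik'
          rw [hpol] at h
          exact hT _ _ _ hc h
        · have hik2 : i = k := by omega
          have hpk := Stmt8.polv_k k b
          rw [hik2, hpk] at hpol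
          have hb : b = false := by
            cases hb2 : b
            · rfl
            · rw [hb2] at hpol
              exact absurd hpol (by simp)
          have huv : T u v = true := by rw [hTuv, hb]; rfl
          rw [hik2, hsk] at hc
          exact hT c u v hc huv
    · intro hpol
      by_cases hik' : i < k
      · refine ⟨s (i+1), ?_⟩
        rw [spine_arc' i hik', hpol]
        rfl
      · have hik2 : i = k := by omega
        have hpk := Stmt8.polv_k k b
        rw [hik2, hpk] at hpol
        have hb : b = true := by
          cases hb2 : b
          · rw [hb2] at hpol
            exact absurd hpol (by simp)
          · rfl
        refine ⟨v, ?_⟩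
        rw [hik2, hsk, ← hbdef]
        exact hb
  have hleafArcTrue : ∀ x (hx : x ∉ P.support),
      Stmt8.polv k b (att x) = true → T (s (att x)) x = true ∧ T x (s (att x)) = false := by
    intro x hx hpol
    obtain ⟨h0, hk', hadjx, huniq⟩ := hatt x hx
    have hfwd := spine_arc (att x) hk'
    rw [hpol] at hfwd
    have hxno : T x (s (att x)) = false := by
      apply hTbool
      intro hcon
      exact hT _ _ _ hcon hfwd
    constructor
    · rcases ((hedge _ _).1 hadjx).2 with h | h
      · rw [hxno] at h
        exact absurd h Bool.false_ne_true
      · exact h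
    · exact hxno
  have hleafArcFalse : ∀ x (hx : x ∉ P.support),
      Stmt8.polv k b (att x) = false → T x (s (att x)) = true ∧ T (s (att x)) x = false := by
    intro x hx hpol
    obtain ⟨h0, hk', hadjx, huniq⟩ := hatt x hx
    have hbwd := spine_arc' (att x) hk'
    rw [hpol] at hbwd
    simp only [Bool.not_false] at hbwd
    have hxno : T (s (att x)) x = false := by
      apply hTbool
      intro hcon
      exact hT _ _ _ hbwd hcon
    constructor
    · rcases ((hedge _ _).1 hadjx).2 with h | h
      · exact h
      · rw [hxno] at h
        exact absurd h Bool.false_ne_true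
    · exact hxno
  have hleafOut : ∀ x (hx : x ∉ P.support),
      ((∃ c, T x c = true) ↔ Stmt8.polv k b (att x) = false) := by
    intro x hx
    constructor
    · rintro ⟨c, hc⟩
      cases hpol : Stmt8.polv k b (att x)
      · rfl
      · exfalso
        have hcs : c = s (att x) := (hatt x hx).2.2.2 c (hTadj x c hc)
        rw [hcs] at hc
        rw [(hleafArcTrue x hx hpol).2] at hc
        exact Bool.false_ne_true hc
    · intro hpol
      exact ⟨s (att x), (hleafArcFalse x hx hpol).1⟩
  have hleafIn : ∀ x (hx : x ∉ P.support),
      ((∃ c, T c x = true) ↔ Stmt8.polv k b (att x) = true) := by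
    intro x hx
    constructor
    · rintro ⟨c, hc⟩
      cases hpol : Stmt8.polv k b (att x)
      · exfalso
        have hcs : c = s (att x) := (hatt x hx).2.2.2 c (hTadj c x hc).symm
        rw [hcs] at hc
        rw [(hleafArcFalse x hx hpol).2] at hc
        exact Bool.false_ne_true hc
      · rfl
    · intro hpol
      exact ⟨s (att x), (hleafArcTrue x hx hpol).1⟩
  have houtIff : ∀ a : W, a ∈ outVerts T ↔ ∃ c, T a c = true := by
    intro a
    simp only [outVerts, Finset.mem_filter, Finset.mem_univ, true_and, ne_eq,
      Finset.card_eq_zero, ← Finset.nonempty_iff_ne_empty, Finset.filter_nonempty_iff]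
    simp only [outNbr]
    constructor
    · rintro ⟨c, hc⟩
      rw [Finset.mem_filter] at hc
      exact ⟨c, hc.2⟩
    · rintro ⟨c, hc⟩
      exact ⟨c, Finset.mem_filter.2 ⟨Finset.mem_univ _, hc⟩⟩
  have hinIff : ∀ a : W, a ∈ inVerts T ↔ ∃ c, T c a = true := by
    intro a
    simp only [inVerts, Finset.mem_filter, Finset.mem_univ, true_and, ne_eq,
      Finset.card_eq_zero, ← Finset.nonempty_iff_ne_empty, Finset.filter_nonempty_iff]
    simp only [inNbr]
    constructor
    · rintro ⟨c, hc⟩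
      rw [Finset.mem_filter] at hc
      exact ⟨c, hc.2⟩
    · rintro ⟨c, hc⟩
      exact ⟨c, Finset.mem_filter.2 ⟨Finset.mem_univ _, hc⟩⟩
  -- counting
  have hLeafDisj : ∀ i ∈ Finset.range (k+1), ∀ j ∈ Finset.range (k+1), i ≠ j →
      Disjoint (Leaf i) (Leaf j) := by
    intro i hi j hj hne
    rw [Finset.mem_range] at hi hj
    rw [Finset.disjoint_left]
    intro a hai haj
    have h1 := hLeafAtt a i (by omega) hai
    have h2 := hLeafAtt a j (by omega) haj
    omega
  have hsnotLeaf : ∀ i j, s i ∉ Leaf j := by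
    intro i j hmem
    exact ((hmemLeaf _ _).1 hmem).1 (Stmt8.getVert_mem_support P i)
  have hPieceDisj : ∀ i ∈ Finset.range (k+1), ∀ j ∈ Finset.range (k+1), i ≠ j →
      ∀ (c1 c2 : Bool), Disjoint (if Stmt8.polv k b i = c1 then {s i} else Leaf i)
        (if Stmt8.polv k b j = c2 then {s j} else Leaf j) := by
    intro i hi j hj hne c1 c2
    rw [Finset.mem_range] at hi hj
    split_ifs
    · rw [Finset.disjoint_left]
      intro a ha1 ha2
      rw [Finset.mem_singleton] at ha1 ha2
      exact hne (hinj i (by omega) j (by omega) (ha1 ▸ ha2 ▸ rfl))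
    · rw [Finset.disjoint_left]
      intro a ha1 ha2
      rw [Finset.mem_singleton] at ha1
      exact hsnotLeaf i j (ha1 ▸ ha2)
    · rw [Finset.disjoint_right]
      intro a ha1 ha2
      rw [Finset.mem_singleton] at ha1
      exact hsnotLeaf j i (ha1 ▸ ha2)
    · exact hLeafDisj i (by simp; omega) j (by simp; omega) hne
  have houtEq : (outVerts T).card = Stmt8.pcount k b ℓT true := by
    have hset : outVerts T = (Finset.range (k+1)).biUnion
        (fun i => if Stmt8.polv k b i = true then {s i} else Leaf i) := by
      ext a
      constructor
      · intro ha
        rw [Finset.mem_biUnion]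
        by_cases has : a ∈ P.support
        · obtain ⟨i, hgi, hik⟩ := SimpleGraph.Walk.mem_support_iff_exists_getVert.1 has
          have hpol : Stmt8.polv k b i = true := by
            apply (hsOut i hik).1
            obtain ⟨c, hc⟩ := (houtIff a).1 ha
            refine ⟨c, ?_⟩
            rw [show s i = a from hgi]
            exact hc
          refine ⟨i, by simp; omega, ?_⟩
          rw [if_pos hpol, Finset.mem_singleton]
          exact hgi.symm
        · have hpol : Stmt8.polv k b (att a) = false := by
            apply (hleafOut a has).1
            exact (houtIff a).1 ha
          refine ⟨att a, by simp; have := (hatt a has).2.1; omega, ?_⟩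
          rw [if_neg (by rw [hpol]; simp)]
          exact hxLeaf a has
      · intro ha
        rw [Finset.mem_biUnion] at ha
        obtain ⟨i, hir, hai⟩ := ha
        rw [Finset.mem_range] at hir
        by_cases hpol : Stmt8.polv k b i = true
        · rw [if_pos hpol, Finset.mem_singleton] at hai
          rw [houtIff, hai]
          exact (hsOut i (by omega)).2 hpol
        · rw [if_neg hpol] at hai
          have hatta := hLeafAtt a i (by omega) hai
          rw [houtIff]
          apply (hleafOut a ((hmemLeaf _ _).1 hai).1).2
          rw [hatta]
          cases hp2 : Stmt8.polv k b i
          · rfl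
          · exact absurd hp2 hpol
    rw [hset, Finset.card_biUnion (fun i hi j hj hne => hPieceDisj i hi j hj hne true true)]
    unfold Stmt8.pcount
    apply Finset.sum_congr rfl
    intro i _
    split_ifs
    · exact Finset.card_singleton _
    · rfl
  have hinEq : (inVerts T).card = Stmt8.pcount k b ℓT false := by
    have hset : inVerts T = (Finset.range (k+1)).biUnion
        (fun i => if Stmt8.polv k b i = false then {s i} else Leaf i) := by
      ext a
      constructor
      · intro ha
        rw [Finset.mem_biUnion]
        by_cases has : a ∈ P.support
        · obtain ⟨i, hgi, hik⟩ := SimpleGraph.Walk.mem_support_iff_exists_getVert.1 has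
          have hpol : Stmt8.polv k b i = false := by
            apply (hsIn i hik).1
            obtain ⟨c, hc⟩ := (hinIff a).1 ha
            refine ⟨c, ?_⟩
            rw [show s i = a from hgi]
            exact hc
          refine ⟨i, by simp; omega, ?_⟩
          rw [if_pos hpol, Finset.mem_singleton]
          exact hgi.symm
        · have hpol : Stmt8.polv k b (att a) = true := by
            apply (hleafIn a has).1
            exact (hinIff a).1 ha
          refine ⟨att a, by simp; have := (hatt a has).2.1; omega, ?_⟩
          rw [if_neg (by rw [hpol]; simp)]
          exact hxLeaf a has
      · intro ha
        rw [Finset.mem_biUnion] at ha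
        obtain ⟨i, hir, hai⟩ := ha
        rw [Finset.mem_range] at hir
        by_cases hpol : Stmt8.polv k b i = false
        · rw [if_pos hpol, Finset.mem_singleton] at hai
          rw [hinIff, hai]
          exact (hsIn i (by omega)).2 hpol
        · rw [if_neg hpol] at hai
          have hatta := hLeafAtt a i (by omega) hai
          rw [hinIff]
          apply (hleafIn a ((hmemLeaf _ _).1 hai).1).2
          rw [hatta]
          cases hp2 : Stmt8.polv k b i
          · exact absurd hp2 hpol
          · rfl
    rw [hset, Finset.card_biUnion (fun i hi j hj hne => hPieceDisj i hi j hj hne false false)]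
    unfold Stmt8.pcount
    apply Finset.sum_congr rfl
    intro i _
    by_cases hpol : Stmt8.polv k b i = false
    · rw [if_pos hpol, if_pos hpol]
      exact Finset.card_singleton _
    · rw [if_neg hpol, if_neg hpol]
  -- bridge
  have hbridge : ∀ pq : Fin n × Fin n, A pq.1 pq.2 = true →
      Stmt8.PGood A k b ℓT pq → GoodArc A T u v k pq := by
    intro pq hApq hgood
    obtain ⟨g, L, h1, h2, h3, h4, h5, h6, h7, h8⟩ := hgood
    have hbijE : ∀ i : ℕ, ∃ e : W → Fin n, i ≤ k →
        (∀ x ∈ Leaf i, e x ∈ L i) ∧ (∀ x ∈ Leaf i, ∀ y ∈ Leaf i, e x = e y → x = y) := by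
      intro i
      by_cases hik : i ≤ k
      · have hcards : Fintype.card (Leaf i : Finset W) =
            Fintype.card (L i : Finset (Fin n)) := by
          rw [Fintype.card_coe, Fintype.card_coe, h2 i hik]
        have e0 := Fintype.equivOfCardEq hcards
        refine ⟨fun x => if hx : x ∈ Leaf i then (e0 ⟨x, hx⟩ : {y // y ∈ L i}).val
          else ⟨0, hn⟩, fun _ => ⟨?_, ?_⟩⟩
        · intro x hx
          dsimp only
          rw [dif_pos hx]
          exact (e0 ⟨x, hx⟩).2
        · intro x hx y hy he
          dsimp only at he
          rw [dif_pos hx, dif_pos hy] at he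
          have := e0.injective (Subtype.ext he)
          exact congrArg Subtype.val this
      · exact ⟨fun _ => ⟨0, hn⟩, fun h => absurd h hik⟩
    choose eF heF using hbijE
    have hidxE : ∀ x : W, ∃ i : ℕ, x ∈ P.support → (s i = x ∧ i ≤ k) := by
      intro x
      by_cases hx : x ∈ P.support
      · obtain ⟨i, hgi, hik⟩ := SimpleGraph.Walk.mem_support_iff_exists_getVert.1 hx
        exact ⟨i, fun _ => ⟨hgi, hik⟩⟩
      · exact ⟨0, fun h => absurd h hx⟩
    choose idx hidxs using hidxE
    set f : W → Fin n := fun x =>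
      if x ∈ P.support then g (idx x) else eF (att x) x with hfdef
    have hfspine : ∀ x, x ∈ P.support → f x = g (idx x) := by
      intro x hx
      rw [hfdef]
      simp only [if_pos hx]
    have hfleaf : ∀ x, x ∉ P.support → f x = eF (att x) x := by
      intro x hx
      rw [hfdef]
      simp only [if_neg hx]
    have hfmem : ∀ x, f x ∈ Stmt8.pimg g L k := by
      intro x
      by_cases hx : x ∈ P.support
      · rw [hfspine x hx]
        exact Stmt8.mem_pimg.2 (Or.inl ⟨idx x, (hidxs x hx).2, rfl⟩)
      · rw [hfleaf x hx]
        exact Stmt8.mem_pimg.2 (Or.inr ⟨att x, hattLe x hx,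
          (heF (att x) (hattLe x hx)).1 x (hxLeaf x hx)⟩)
    have hidxval : ∀ x (hx : x ∈ P.support) i, i ≤ k → s i = x → idx x = i := by
      intro x hx i hik hsi
      exact hinj _ (hidxs x hx).2 _ hik ((hidxs x hx).1.trans hsi.symm)
    have husupp : u ∈ P.support := SimpleGraph.Walk.end_mem_support P
    have hvsupp : v ∈ P.support := hskm ▸ Stmt8.getVert_mem_support P (k-1)
    have hfu : f u = g k := by
      rw [hfspine u husupp, hidxval u husupp k le_rfl hsk]
    have hfv : f v = g (k-1) := by
      rw [hfspine v hvsupp, hidxval v hvsupp (k-1) (by omega) hskm]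
    refine ⟨f, ?_, ?_, ?_, ?_⟩
    · -- injective
      intro x y he
      by_cases hx : x ∈ P.support <;> by_cases hy : y ∈ P.support
      · rw [hfspine x hx, hfspine y hy] at he
        have hij := h1 _ _ (hidxs x hx).2 (hidxs y hy).2 he
        rw [← (hidxs x hx).1, ← (hidxs y hy).1, hij]
      · exfalso
        rw [hfspine x hx, hfleaf y hy] at he
        apply h3 (idx x) (att y) (hidxs x hx).2 (hattLe y hy)
        rw [he]
        exact (heF (att y) (hattLe y hy)).1 y (hxLeaf y hy)
      · exfalso
        rw [hfleaf x hx, hfspine y hy] at he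
        apply h3 (idx y) (att x) (hidxs y hy).2 (hattLe x hx)
        rw [← he]
        exact (heF (att x) (hattLe x hx)).1 x (hxLeaf x hx)
      · rw [hfleaf x hx, hfleaf y hy] at he
        by_cases hatteq : att x = att y
        · rw [hatteq] at he
          have hxmem := hxLeaf x hx
          rw [hatteq] at hxmem
          exact (heF (att y) (hattLe y hy)).2 x hxmem y (hxLeaf y hy) he
        · exfalso
          have hm1 := (heF (att x) (hattLe x hx)).1 x (hxLeaf x hx)
          have hm2 := (heF (att y) (hattLe y hy)).1 y (hxLeaf y hy)
          rw [he] at hm1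
          exact (Finset.disjoint_left.1
            (h4 (att x) (att y) (hattLe x hx) (hattLe y hy) hatteq) hm1) hm2
    · -- arc preserving
      intro x y hTxy
      show A (f x) (f y) = true
      have hTxy' : T x y = true := hTxy
      have hadjxy := hTadj x y hTxy'
      by_cases hx : x ∈ P.support <;> by_cases hy : y ∈ P.support
      · -- both on spine
        obtain ⟨hsx, hxk⟩ := hidxs x hx
        obtain ⟨hsy, hyk⟩ := hidxs y hy
        have hchord := Stmt8.chord htree' P hP (idx x) (idx y) hxk hyk
          (by show (underG T).Adj (s (idx x)) (s (idx y)); rw [hsx, hsy]; exact hadjxy)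
        rw [hfspine x hx, hfspine y hy]
        rcases hchord with hc | hc
        · -- idx y = idx x + 1
          have hlt : idx x < k := by omega
          have hpol : Stmt8.polv k b (idx x) = true := by
            rw [← spine_arc (idx x) hlt]
            rw [hsx]
            rw [show s (idx x + 1) = y from by rw [← hc]; exact hsy]
            exact hTxy'
          have := h5 (idx x) hlt
          rw [hpol] at this
          simp at this
          rw [hc]
          exact this
        · -- idx x = idx y + 1
          have hlt : idx y < k := by omega
          have hpol : Stmt8.polv k b (idx y) = false := by
            have h := spine_arc' (idx y) hlt
            rw [show s (idx y + 1) = x from by rw [← hc]; exact hsx, hsy] at h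
            rw [hTxy'] at h
            cases hp2 : Stmt8.polv k b (idx y)
            · rfl
            · rw [hp2] at h
              simp at h
          have := h5 (idx y) hlt
          rw [hpol] at this
          simp at this
          rw [hc]
          exact this
      · -- x spine, y leaf
        have hys : y ∉ P.support := hy
        have hxatt : x = s (att y) := (hatt y hys).2.2.2 x hadjxy.symm
        have hiatt : idx x = att y := hidxval x hx (att y) (hattLe y hys) hxatt.symm
        have hpol : Stmt8.polv k b (att y) = true := by
          cases hp2 : Stmt8.polv k b (att y)
          · exfalso
            have := (hleafArcFalse y hys hp2).2
            rw [← hxatt] at this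
            rw [hTxy'] at this
            simp at this
          · rfl
        have h6' := h6 (att y) (hattLe y hys) (eF (att y) y)
          ((heF (att y) (hattLe y hys)).1 y (hxLeaf y hys))
        rw [hpol] at h6'
        simp at h6'
        rw [hfspine x hx, hfleaf y hys, hiatt]
        exact h6'
      · -- x leaf, y spine
        have hxs : x ∉ P.support := hx
        have hyatt : y = s (att x) := (hatt x hxs).2.2.2 y hadjxy
        have hiatt : idx y = att x := hidxval y hy (att x) (hattLe x hxs) hyatt.symm
        have hpol : Stmt8.polv k b (att x) = false := by
          cases hp2 : Stmt8.polv k b (att x)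
          · rfl
          · exfalso
            have := (hleafArcTrue x hxs hp2).2
            rw [← hyatt] at this
            rw [hTxy'] at this
            simp at this
        have h6' := h6 (att x) (hattLe x hxs) (eF (att x) x)
          ((heF (att x) (hattLe x hxs)).1 x (hxLeaf x hxs))
        rw [hpol] at h6'
        simp at h6'
        rw [hfleaf x hxs, hfspine y hy, hiatt]
        exact h6'
      · -- both leaves: impossible
        exfalso
        have hyatt : y = s (att x) := (hatt x hx).2.2.2 y hadjxy
        apply hy
        rw [hyatt]
        exact Stmt8.getVert_mem_support P (att x)
    · -- final edge
      cases hb2 : b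
      · right
        constructor
        · rw [hTuv, hb2]
          rfl
        · rw [hfu, hfv, h7, hb2]
          rfl
      · left
        constructor
        · rw [← hbdef]
          exact hb2
        · rw [hfu, hfv, h7, hb2]
          rfl
    · -- region
      intro z
      constructor
      · intro hpar hcyc
        rintro ⟨x0, rfl⟩
        have h8' := (h8 (f x0) (hfmem x0)).1 hpar
        rw [hfu, hfv] at hcyc
        exact h8' hcyc
      · intro hpar hne1 hne2 hncyc
        rintro ⟨x0, rfl⟩
        have h8' := (h8 (f x0) (hfmem x0)).2 hpar
        rcases h8' with h | h | h
        · exact hne1 (h.trans hfu.symm)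
        · exact hne2 (h.trans hfv.symm)
        · rw [hfu, hfv] at hncyc
          exact hncyc h
  -- final assembly
  rw [houtEq, hinEq]
  have hpure := Stmt8.pure_main k hk1 A hloop b ℓT hl0 hlk
  refine le_trans hpure ?_
  rw [← Set.ncard_coe_finset]
  apply Set.ncard_le_ncard _ (Set.toFinite _)
  intro pq hpq
  simp only [Finset.coe_filter, Set.mem_setOf_eq, Finset.mem_univ, true_and] at hpq
  exact ⟨hpq.1, hbridge pq hpq.1 hpq.2⟩
end

section
/- Let k and r be positive integers with r ≤ ⌈k/2⌉, and let H be a bipartite graph with parts A and B satisfying |A| = |B| and e(H) > (k−1)·|H|/2. Then there exists a subgraph H' of H with parts A' ⊆ A, B' ⊆ B such that: (1) e(H') > (k−1)·|H'|/2; (2) deg_{H'}(a) + deg_{H'}(b) ≥ k for every a ∈ A' and b ∈ B'; and moreover at least one of the following holds: (3-I) every vertex of A' has degree at least k/2 in H', every vertex of B' has degree at least r in H', there is a vertex a ∈ A' with deg_{H'}(a) ≥ k, and |A'| ≤ |B'|; or (3-II) every vertex of H' has degree at least k/2 in H', there is a vertex b ∈ B' with deg_{H'}(b) ≥ k, and every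 a ∈ A' satisfies deg_H(a) > k − r. -/
open Finset

section AuxBip

variable {α β : Type*} [Fintype α] [DecidableEq α] [Fintype β] [DecidableEq β]

/-- Number of edges of `E` between `S` and `T`. -/
private def eAB (E : α → β → Bool) (S : Finset α) (T : Finset β) : ℕ :=
  ∑ a ∈ S, (T.filter fun b => E a b).card

private lemma eAB_eq_sumB (E : α → β → Bool) (S : Finset α) (T : Finset β) :
    eAB E S T = ∑ b ∈ T, (S.filter fun a => E a b).card := by
  unfold eAB
  simp only [Finset.card_filter]
  exact Finset.sum_comm

private lemma arcCount_restrict (E : α → β → Bool) (S : Finset α) (T : Finset β) :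
    bipArcCount (fun a b => decide (a ∈ S) && (decide (b ∈ T) && E a b)) = eAB E S T := by
  rw [bipArcCount, Finset.card_filter, Fintype.sum_prod_type, eAB]
  rw [← Finset.sum_subset (Finset.subset_univ S) (by intro a _ haS; simp [haS])]
  apply Finset.sum_congr rfl
  intro a haS
  rw [Finset.card_filter]
  rw [← Finset.sum_subset (Finset.subset_univ T) (by intro b _ hbT; simp [hbT])]
  apply Finset.sum_congr rfl
  intro b hbT
  simp [haS, hbT]

private lemma degA_restrict (E : α → β → Bool) (S : Finset α) (T : Finset β) {a : α}
    (ha : a ∈ S) :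
    bipDegA (fun a b => decide (a ∈ S) && (decide (b ∈ T) && E a b)) a
      = (T.filter fun b => E a b).card := by
  rw [bipDegA]
  congr 1
  ext b
  simp [ha]

private lemma degB_restrict (E : α → β → Bool) (S : Finset α) (T : Finset β) {b : β}
    (hb : b ∈ T) :
    bipDegB (fun a b => decide (a ∈ S) && (decide (b ∈ T) && E a b)) b
      = (S.filter fun a => E a b).card := by
  rw [bipDegB]
  congr 1
  ext a
  simp [hb]

private lemma degA_le_full (E : α → β → Bool) (T : Finset β) (a : α) :
    (T.filter fun b => E a b).card ≤ bipDegA E a := by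
  rw [bipDegA]
  exact Finset.card_le_card (Finset.filter_subset_filter _ (Finset.subset_univ T))

private lemma eAB_eraseA (E : α → β → Bool) (S : Finset α) (T : Finset β) {a : α}
    (ha : a ∈ S) :
    (T.filter fun b => E a b).card + eAB E (S.erase a) T = eAB E S T := by
  unfold eAB
  exact Finset.add_sum_erase S (fun x => (T.filter fun b => E x b).card) ha

private lemma eAB_eraseB (E : α → β → Bool) (S : Finset α) (T : Finset β) {b : β}
    (hb : b ∈ T) :
    (S.filter fun a => E a b).card + eAB E S (T.erase b) = eAB E S T := by
  rw [eAB_eq_sumB E S T, eAB_eq_sumB E S (T.erase b)]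
  exact Finset.add_sum_erase T (fun y => (S.filter fun a => E a y).card) hb

end AuxBip

/-- The bipartite subgraph lemma (Lemma `lemma:bipartite` of the paper). -/
theorem stmt_10 (k r : ℕ) (hk : 0 < k) (hr : 0 < r) (hrk : r ≤ (k + 1) / 2)
    {α β : Type*} [Fintype α] [DecidableEq α] [Fintype β] [DecidableEq β]
    (E : α → β → Bool) (hcard : Fintype.card α = Fintype.card β)
    (hE : (k - 1) * (Fintype.card α + Fintype.card β) < 2 * bipArcCount E) :
    ∃ (A' : Finset α) (B' : Finset β) (E' : α → β → Bool),
      (∀ a b, E' a b → E a b ∧ a ∈ A' ∧ b ∈ B') ∧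
      (k - 1) * (A'.card + B'.card) < 2 * bipArcCount E' ∧
      (∀ a ∈ A', ∀ b ∈ B', k ≤ bipDegA E' a + bipDegB E' b) ∧
      (((∀ a ∈ A', k ≤ 2 * bipDegA E' a) ∧ (∀ b ∈ B', r ≤ bipDegB E' b) ∧
          (∃ a ∈ A', k ≤ bipDegA E' a) ∧ A'.card ≤ B'.card) ∨
        ((∀ a ∈ A', k ≤ 2 * bipDegA E' a) ∧ (∀ b ∈ B', k ≤ 2 * bipDegB E' b) ∧
          (∃ b ∈ B', k ≤ bipDegB E' b) ∧ (∀ a ∈ A', k - r < bipDegA E a))) := by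
  classical
  have h2r : 2 * r ≤ k + 1 := by
    have := (Nat.le_div_iff_mul_le (by norm_num : (0:ℕ) < 2)).mp hrk
    omega
  -- the family of admissible sub-pairs
  set P : Finset α × Finset β → Prop := fun p =>
    (k - 1) * (p.1.card + p.2.card) < 2 * eAB E p.1 p.2 ∧
      (p.1.card ≤ p.2.card ∨ ∀ a ∈ p.1, k - r < bipDegA E a) with hP
  have hEfull : (fun a b => decide (a ∈ (univ : Finset α)) &&
      (decide (b ∈ (univ : Finset β)) && E a b)) = E := by
    funext a b; simp
  have huniv : P ((univ : Finset α), (univ : Finset β)) := by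
    constructor
    · have h1 : eAB E (univ : Finset α) (univ : Finset β) = bipArcCount E := by
        rw [← arcCount_restrict E univ univ, hEfull]
      simpa [h1, Finset.card_univ] using hE
    · left
      simp [Finset.card_univ, hcard]
  obtain ⟨⟨S, T⟩, hmem, hmin⟩ := Finset.exists_min_image
    ((univ : Finset (Finset α × Finset β)).filter P) (fun p => p.1.card + p.2.card)
    ⟨(univ, univ), by simpa using huniv⟩
  rw [Finset.mem_filter] at hmem
  obtain ⟨-, hd, hside⟩ := hmem
  simp only at hd hside
  -- minimality: any strictly smaller admissible pair fails the density condition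
  have hnot : ∀ S' : Finset α, ∀ T' : Finset β,
      S'.card + T'.card < S.card + T.card →
      (S'.card ≤ T'.card ∨ ∀ a ∈ S', k - r < bipDegA E a) →
      2 * eAB E S' T' ≤ (k - 1) * (S'.card + T'.card) := by
    intro S' T' hlt hside'
    by_contra hcon
    push_neg at hcon
    have hmem' : (S', T') ∈ (univ : Finset (Finset α × Finset β)).filter P := by
      rw [Finset.mem_filter]
      exact ⟨Finset.mem_univ _, hcon, hside'⟩
    have := hmin _ hmem'
    simp only at this
    omega
  -- (F-a): every vertex of S has degree at least k/2
  have hFa : ∀ a ∈ S, k ≤ 2 * (T.filter fun b => E a b).card := by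
    intro a ha
    have hsum : (T.filter fun b => E a b).card + eAB E (S.erase a) T = eAB E S T :=
      eAB_eraseA E S T ha
    have hc : (S.erase a).card + 1 = S.card := Finset.card_erase_add_one ha
    have hlt : (S.erase a).card + T.card < S.card + T.card := by omega
    have hprod : (k - 1) * (S.card + T.card)
        = (k - 1) * ((S.erase a).card + T.card) + (k - 1) := by
      rw [← hc]; ring
    have hside' : (S.erase a).card ≤ T.card ∨ ∀ x ∈ S.erase a, k - r < bipDegA E x := by
      rcases hside with h | h
      · left; omega
      · right; exact fun x hx => h x (Finset.mem_of_mem_erase hx)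
    have := hnot _ _ hlt hside'
    omega
  -- existence of a vertex of degree ≥ k on the smaller side
  have hExa : S.card ≤ T.card → ∃ a ∈ S, k ≤ (T.filter fun b => E a b).card := by
    intro hle
    by_contra hcon
    push_neg at hcon
    have hle1 : ∀ a ∈ S, (T.filter fun b => E a b).card ≤ k - 1 := by
      intro a ha; have := hcon a ha; omega
    have h1 : eAB E S T ≤ S.card * (k - 1) := by
      have := Finset.sum_le_card_nsmul S (fun a => (T.filter fun b => E a b).card) (k - 1) hle1
      simpa [smul_eq_mul, eAB] using this
    have h2 : (k - 1) * (2 * S.card) ≤ (k - 1) * (S.card + T.card) :=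
      Nat.mul_le_mul_left _ (by omega)
    have h3 : 2 * eAB E S T ≤ (k - 1) * (2 * S.card) := by
      calc 2 * eAB E S T ≤ 2 * (S.card * (k - 1)) := by omega
        _ = (k - 1) * (2 * S.card) := by ring
    omega
  have hExb : T.card ≤ S.card → ∃ b ∈ T, k ≤ (S.filter fun a => E a b).card := by
    intro hle
    by_contra hcon
    push_neg at hcon
    have hle1 : ∀ b ∈ T, (S.filter fun a => E a b).card ≤ k - 1 := by
      intro b hb; have := hcon b hb; omega
    have h1 : eAB E S T ≤ T.card * (k - 1) := by
      rw [eAB_eq_sumB]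
      have := Finset.sum_le_card_nsmul T (fun b => (S.filter fun a => E a b).card) (k - 1) hle1
      simpa [smul_eq_mul] using this
    have h2 : (k - 1) * (2 * T.card) ≤ (k - 1) * (S.card + T.card) :=
      Nat.mul_le_mul_left _ (by omega)
    have h3 : 2 * eAB E S T ≤ (k - 1) * (2 * T.card) := by
      calc 2 * eAB E S T ≤ 2 * (T.card * (k - 1)) := by omega
        _ = (k - 1) * (2 * T.card) := by ring
    omega
  -- (F-ab): if |S| ≤ |T| then deg(a) + deg(b) ≥ k for all pairs
  have hFab : S.card ≤ T.card → ∀ a ∈ S, ∀ b ∈ T,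
      k ≤ (T.filter fun b' => E a b').card + (S.filter fun a' => E a' b).card := by
    intro hle a ha b hb
    have hsum1 : (T.filter fun b' => E a b').card + eAB E (S.erase a) T = eAB E S T :=
      eAB_eraseA E S T ha
    have hsum2 : ((S.erase a).filter fun a' => E a' b).card
        + eAB E (S.erase a) (T.erase b) = eAB E (S.erase a) T :=
      eAB_eraseB E (S.erase a) T hb
    have hmono : ((S.erase a).filter fun a' => E a' b).card
        ≤ (S.filter fun a' => E a' b).card :=
      Finset.card_le_card (Finset.filter_subset_filter _ (Finset.erase_subset _ _))
    have hcS : (S.erase a).card + 1 = S.card := Finset.card_erase_add_one ha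
    have hcT : (T.erase b).card + 1 = T.card := Finset.card_erase_add_one hb
    have hlt : (S.erase a).card + (T.erase b).card < S.card + T.card := by omega
    have hprod : (k - 1) * (S.card + T.card)
        = (k - 1) * ((S.erase a).card + (T.erase b).card) + (k - 1) + (k - 1) := by
      rw [← hcS, ← hcT]; ring
    have hside' : (S.erase a).card ≤ (T.erase b).card ∨
        ∀ x ∈ S.erase a, k - r < bipDegA E x := by
      left; omega
    have := hnot _ _ hlt hside'
    omega
  -- (F-b): if all of S is good, every vertex of T has degree at least k/2
  have hFb : (∀ a ∈ S, k - r < bipDegA E a) →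
      ∀ b ∈ T, k ≤ 2 * (S.filter fun a => E a b).card := by
    intro hgood b hb
    have hsum : (S.filter fun a => E a b).card + eAB E S (T.erase b) = eAB E S T :=
      eAB_eraseB E S T hb
    have hc : (T.erase b).card + 1 = T.card := Finset.card_erase_add_one hb
    have hlt : S.card + (T.erase b).card < S.card + T.card := by omega
    have hprod : (k - 1) * (S.card + T.card)
        = (k - 1) * (S.card + (T.erase b).card) + (k - 1) := by
      rw [← hc]; ring
    have := hnot _ _ hlt (Or.inr hgood)
    omega
  -- assemble the answer
  refine ⟨S, T, fun a b => decide (a ∈ S) && (decide (b ∈ T) && E a b), ?_, ?_, ?_, ?_⟩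
  · intro a b h
    simp only [Bool.and_eq_true, decide_eq_true_eq] at h
    exact ⟨h.2.2, h.1, h.2.1⟩
  · rw [arcCount_restrict]
    exact hd
  · -- pairwise degree sum condition
    intro a ha b hb
    rw [degA_restrict E S T ha, degB_restrict E S T hb]
    by_cases hgood : ∀ a ∈ S, k - r < bipDegA E a
    · have h1 := hFa a ha
      have h2 := hFb hgood b hb
      omega
    · have hle : S.card ≤ T.card := hside.resolve_right hgood
      exact hFab hle a ha b hb
  · by_cases hgood : ∀ a ∈ S, k - r < bipDegA E a
    · rcases le_or_gt S.card T.card with hle | hlt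
      · -- Case I
        left
        obtain ⟨a0, ha0, ha0k⟩ := hExa hle
        refine ⟨?_, ?_, ⟨a0, ha0, ?_⟩, hle⟩
        · intro a ha; rw [degA_restrict E S T ha]; exact hFa a ha
        · intro b hb
          rw [degB_restrict E S T hb]
          have := hFb hgood b hb
          omega
        · rw [degA_restrict E S T ha0]; exact ha0k
      · -- Case II
        right
        obtain ⟨b0, hb0, hb0k⟩ := hExb (Nat.le_of_lt hlt)
        refine ⟨?_, ?_, ⟨b0, hb0, ?_⟩, hgood⟩
        · intro a ha; rw [degA_restrict E S T ha]; exact hFa a ha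
        · intro b hb; rw [degB_restrict E S T hb]; exact hFb hgood b hb
        · rw [degB_restrict E S T hb0]; exact hb0k
    · -- Case I (a bad vertex exists in S)
      left
      have hle : S.card ≤ T.card := hside.resolve_right hgood
      have hBr : ∀ b ∈ T, r ≤ (S.filter fun a => E a b).card := by
        by_contra hcon
        push_neg at hcon
        obtain ⟨b0, hb0, hb0r⟩ := hcon
        apply hgood
        intro a ha
        have h1 := hFab hle a ha b0 hb0
        have h2 := degA_le_full E T a
        omega
      obtain ⟨a0, ha0, ha0k⟩ := hExa hle
      refine ⟨?_, ?_, ⟨a0, ha0, ?_⟩, hle⟩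
      · intro a ha; rw [degA_restrict E S T ha]; exact hFa a ha
      · intro b hb; rw [degB_restrict E S T hb]; exact hBr b hb
      · rw [degA_restrict E S T ha0]; exact ha0k
end
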